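/- arXiv:2207.00863 — 3 statements merged into one kernel-verified Lean document; each statement's English description precedes it below -/
import Mathlib

section
/- Let λ ∈ Γ_k ⊂ ℝ^n and let integers k, l, r, s satisfy k > l ≥ 0, r > s ≥ 0, k ≥ r and l ≥ s. Then [ (σ_k(λ)/C_n^k) / (σ_l(λ)/C_n^l) ]^{1/(k−l)} ≤ [ (σ_r(λ)/C_n^r) / (σ_s(λ)/C_n^s) ]^{1/(r−s)}, where C_n^m = binomial(n, m) (generalized Newton–MacLaurin inequality). -/
open scoped BigOperators Topology
open MeasureTheory

noncomputable section

abbrev E (n : ℕ) := EuclideanSpace ℝ (Fin n)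

/-- the `m`-th elementary symmetric polynomial of `lam : Fin n → ℝ` -/
def esym (n m : ℕ) (lam : Fin n → ℝ) : ℝ :=
  ∑ s ∈ Finset.univ.powersetCard m, ∏ i ∈ s, lam i

/-- the Gårding cone `Γ_k` -/
def GCone (n k : ℕ) : Set (Fin n → ℝ) :=
  {lam | ∀ m, 1 ≤ m → m ≤ k → 0 < esym n m lam}

/-- partial derivative `∂u/∂x_i` -/
def pd {n : ℕ} (u : E n → ℝ) (i : Fin n) (x : E n) : ℝ :=
  fderiv ℝ u x (EuclideanSpace.single i 1)

/-- gradient vector `Du` -/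
def gradVec {n : ℕ} (u : E n → ℝ) (x : E n) : E n :=
  WithLp.toLp 2 (fun i => pd u i x)

/-- Hessian matrix `D²u` -/
def hess {n : ℕ} (u : E n → ℝ) (x : E n) : Matrix (Fin n) (Fin n) ℝ :=
  Matrix.of fun i j => pd (pd u j) i x

/-- `w = √(1+|Du|²)` -/
def wgt {n : ℕ} (u : E n → ℝ) (x : E n) : ℝ :=
  Real.sqrt (1 + ∑ i, (pd u i x) ^ 2)

/-- the matrix `γ^{ij} = δ_{ij} - u_i u_j/(w(1+w))` -/
def gam {n : ℕ} (u : E n → ℝ) (x : E n) : Matrix (Fin n) (Fin n) ℝ :=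
  Matrix.of fun i j =>
    (if i = j then (1:ℝ) else 0) - pd u i x * pd u j x / (wgt u x * (1 + wgt u x))

/-- the curvature matrix `A = (1/w) γ D²u γ`, whose eigenvalues are `κ[M_u]` -/
def curvMat {n : ℕ} (u : E n → ℝ) (x : E n) : Matrix (Fin n) (Fin n) ℝ :=
  (wgt u x)⁻¹ • (gam u x * hess u x * gam u x)

/-- Frobenius norm of the second fundamental form `h_{ij} = u_{ij}/w` -/
def sffNorm {n : ℕ} (u : E n → ℝ) (x : E n) : ℝ :=
  Real.sqrt (∑ i, ∑ j, (hess u x i j / wgt u x) ^ 2)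

/-- the eigenvalue vector of the symmetric matrix `A` lies in `S` -/
def EigsIn {n : ℕ} (A : Matrix (Fin n) (Fin n) ℝ) (S : Set (Fin n → ℝ)) : Prop :=
  ∃ hA : A.IsHermitian, hA.eigenvalues ∈ S

/-- the eigenvalue vector of `A` lies in `S` and `σ_k` of it equals `c` -/
def SigmaEig {n : ℕ} (k : ℕ) (A : Matrix (Fin n) (Fin n) ℝ) (S : Set (Fin n → ℝ)) (c : ℝ) : Prop :=
  ∃ hA : A.IsHermitian, hA.eigenvalues ∈ S ∧ esym n k hA.eigenvalues = c

section NMproof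
open Polynomial Finset

namespace NMaux

lemma sq_sum_eq {ι : Type*} [DecidableEq ι] (s : Finset ι) (f : ι → ℝ) :
    (∑ i ∈ s, f i)^2 = ∑ i ∈ s, f i ^ 2 + 2 * ∑ t ∈ s.powersetCard 2, ∏ i ∈ t, f i := by
  induction s using Finset.induction with
  | empty => rw [Finset.powersetCard_eq_empty.2 (by simp)]; simp
  | @insert a s ha ih =>
    rw [Finset.sum_insert ha, Finset.sum_insert ha, Finset.powersetCard_succ_insert ha,
      Finset.sum_union, Finset.sum_image]
    · have h1 : ∑ t ∈ s.powersetCard 1, ∏ i ∈ insert a t, f i = f a * ∑ i ∈ s, f i := by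
        rw [Finset.mul_sum, Finset.powersetCard_one, Finset.sum_map]
        refine Finset.sum_congr rfl fun i hi => ?_
        simp only [Function.Embedding.coeFn_mk]
        rw [Finset.prod_insert (by simp; rintro rfl; exact ha hi), Finset.prod_singleton]
      rw [h1]; ring_nf; rw [ih]; ring
    · intro t ht u hu h
      have hta : a ∉ t := fun h' => ha ((Finset.mem_powersetCard.1 ht).1 h')
      have hua : a ∉ u := fun h' => ha ((Finset.mem_powersetCard.1 hu).1 h')
      have := congrArg (Finset.erase · a) h
      simpa [Finset.erase_insert, hta, hua] using this
    · refine Finset.disjoint_left.2 fun t ht ht' => ?_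
      obtain ⟨u, hu, rfl⟩ := Finset.mem_image.1 ht'
      exact ha ((Finset.mem_powersetCard.1 ht).1 (Finset.mem_insert_self a u))

lemma esym_compl {n : ℕ} (f : Fin n → ℝ) (k : ℕ) (hk : k ≤ n) :
    esym n (n - k) f = ∑ t ∈ (univ : Finset (Fin n)).powersetCard k, ∏ i ∈ tᶜ, f i := by
  unfold esym
  refine Finset.sum_nbij' (i := fun t => tᶜ) (j := fun t => tᶜ) ?_ ?_ ?_ ?_ ?_
  · intro t ht
    rw [Finset.mem_powersetCard_univ] at ht ⊢
    rw [Finset.card_compl, Fintype.card_fin, ht]; omega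
  · intro t ht
    rw [Finset.mem_powersetCard_univ] at ht ⊢
    rw [Finset.card_compl, Fintype.card_fin, ht]
  · intro t _; exact compl_compl t
  · intro t _; exact compl_compl t
  · intro t _; rw [compl_compl]

lemma prod_compl_pair {n : ℕ} (f : Fin n → ℝ) {i j : Fin n} (hij : i ≠ j) :
    (∏ x ∈ ({i}ᶜ : Finset (Fin n)), f x) * ∏ x ∈ ({j}ᶜ : Finset (Fin n)), f x
      = (∏ x, f x) * ∏ x ∈ ({i, j}ᶜ : Finset (Fin n)), f x := by
  have hji : j ∈ ({i}ᶜ : Finset (Fin n)) := by simp [hij.symm]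
  have hij' : i ∈ ({j}ᶜ : Finset (Fin n)) := by simp [hij]
  have h1 : ({i}ᶜ : Finset (Fin n)).erase j = ({i, j}ᶜ : Finset (Fin n)) := by
    ext x; simp [Finset.mem_erase, and_comm, not_or]
  have h2 : ({j}ᶜ : Finset (Fin n)).erase i = ({i, j}ᶜ : Finset (Fin n)) := by
    ext x; simp [Finset.mem_erase, not_or]
  have e1 : (univ : Finset (Fin n)).erase i = ({i}ᶜ : Finset (Fin n)) :=
    (Finset.compl_singleton i).symm
  have h3 : (∏ x, f x) = f i * (f j * ∏ x ∈ ({i, j}ᶜ : Finset (Fin n)), f x) := by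
    rw [← Finset.mul_prod_erase _ f (Finset.mem_univ i), e1, ← Finset.mul_prod_erase _ f hji, h1]
  rw [← Finset.mul_prod_erase _ f hji, ← Finset.mul_prod_erase _ f hij', h1, h2, h3]
  ring

/-- base case of Newton: `2 n e_{n-2} e_n ≤ (n-1) e_{n-1}^2`. -/
lemma newton_top {n : ℕ} (f : Fin n → ℝ) (hn : 2 ≤ n) :
    2 * (n:ℝ) * (esym n (n-2) f * esym n n f) ≤ ((n:ℝ) - 1) * (esym n (n-1) f)^2 := by
  set a : Fin n → ℝ := fun i => ∏ x ∈ ({i}ᶜ : Finset (Fin n)), f x with ha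
  have hcu : (univ : Finset (Fin n)).card = n := by simp
  have hen : esym n n f = ∏ x, f x := by
    unfold esym
    have hps : Finset.powersetCard n (univ : Finset (Fin n)) = {univ} := by
      ext t
      rw [Finset.mem_powersetCard_univ, Finset.mem_singleton]
      constructor
      · intro h; apply Finset.eq_univ_of_card; rw [h, Fintype.card_fin]
      · rintro rfl; simp
    rw [hps, Finset.sum_singleton]
  have hen1 : esym n (n-1) f = ∑ i, a i := by
    rw [esym_compl f 1 (by omega), Finset.powersetCard_one, Finset.sum_map]
    rfl
  have hen2 : 2 * (esym n (n-2) f * esym n n f) = (∑ i, a i)^2 - ∑ i, (a i)^2 := by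
    rw [esym_compl f 2 (by omega), hen, sq_sum_eq]
    rw [Finset.sum_mul]
    have : ∀ t ∈ (univ : Finset (Fin n)).powersetCard 2,
        (∏ i ∈ tᶜ, f i) * ∏ x, f x = ∏ i ∈ t, a i := by
      intro t ht
      rw [Finset.mem_powersetCard_univ, Finset.card_eq_two] at ht
      obtain ⟨i, j, hij, rfl⟩ := ht
      rw [Finset.prod_pair hij, ha]
      rw [prod_compl_pair f hij]; ring
    rw [Finset.sum_congr rfl this]; ring
  have hCS : (∑ i, a i)^2 ≤ (n:ℝ) * ∑ i, (a i)^2 := by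
    have := sq_sum_le_card_mul_sum_sq (s := (univ : Finset (Fin n))) (f := a)
    rw [hcu] at this
    exact_mod_cast this
  have h3 : (n:ℝ) * (2 * (esym n (n-2) f * esym n n f))
      = (n:ℝ) * (∑ i, a i)^2 - (n:ℝ) * ∑ i, (a i)^2 := by rw [hen2]; ring
  rw [hen1]
  nlinarith [h3, hCS]

lemma exists_fn (s : Multiset ℝ) : ∃ f : Fin (Multiset.card s) → ℝ,
    (Finset.univ.val.map f) = s := by
  obtain ⟨l, rfl⟩ := s.exists_rep
  have hl : (Multiset.card (l : Multiset ℝ)) = l.length := by simp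
  refine ⟨fun i => l.get (Fin.cast hl i), ?_⟩
  rw [Fin.univ_val_map]
  have : List.ofFn (fun i : Fin (Multiset.card (l : Multiset ℝ)) => l.get (Fin.cast hl i))
      = List.ofFn l.get := by
    rw [← List.ofFn_congr hl.symm]
  exact congrArg (fun m : List ℝ => (m : Multiset ℝ)) (this.trans (List.ofFn_get l))


lemma exists_shrink {n : ℕ} (hn : 1 ≤ n) (s : Multiset ℝ) (hcard : Multiset.card s = n) :
    ∃ t : Multiset ℝ, Multiset.card t = n - 1 ∧
      ∀ m, m ≤ n - 1 → (n : ℝ) * t.esymm m = ((n - m : ℕ) : ℝ) * s.esymm m := by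
  classical
  set f : ℝ[X] := (s.map fun a => X - C a).prod with hf
  have hmonic : f.Monic := monic_multiset_prod_of_monic _ _ (fun a _ => monic_X_sub_C a)
  have hroots : f.roots = s := roots_multiset_prod_X_sub_C s
  have hdeg : f.natDegree = n := by
    rw [hf, natDegree_multiset_prod_of_monic]
    · simp only [Multiset.map_map, Function.comp_apply, natDegree_X_sub_C]
      simp [hcard]
    · intro p hp
      obtain ⟨a, _, rfl⟩ := Multiset.mem_map.1 hp
      exact monic_X_sub_C a
  set g := derivative f with hg
  have hgtop : g.coeff (n - 1) = (n : ℝ) := by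
    rw [hg, coeff_derivative]
    have : n - 1 + 1 = n := by omega
    rw [this]
    have : f.coeff n = 1 := by rw [← hdeg]; exact hmonic.coeff_natDegree
    rw [this]
    push_cast [Nat.cast_sub hn]
    ring
  have hgne : g.coeff (n-1) ≠ 0 := by rw [hgtop]; positivity
  have hgdeg : g.natDegree = n - 1 := by
    have h1 : g.natDegree ≤ n - 1 := by
      have h := natDegree_derivative_le f
      rw [hdeg] at h
      exact h
    have h2 : n - 1 ≤ g.natDegree := le_natDegree_of_ne_zero hgne
    omega
  have hcr : Multiset.card g.roots = n - 1 := by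
    have h1 : Multiset.card g.roots ≤ n - 1 := by
      have := g.card_roots'
      rw [hgdeg] at this
      exact this
    have h2 := f.card_roots_le_derivative
    rw [hroots, hcard, ← hg] at h2
    omega
  refine ⟨g.roots, hcr, fun m hm => ?_⟩
  have hlead : g.leadingCoeff = (n:ℝ) := by rw [Polynomial.leadingCoeff, hgdeg, hgtop]
  have hkey := Polynomial.coeff_eq_esymm_roots_of_card (p := g)
    (by rw [hcr, hgdeg]) (k := n-1-m) (by rw [hgdeg]; omega)
  rw [hgdeg, hlead] at hkey
  have hd1 : n - 1 - (n-1-m) = m := by omega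
  rw [hd1] at hkey
  have hfc : f.coeff (n-m) = (-1:ℝ)^m * s.esymm m := by
    have hfcard : Multiset.card f.roots = f.natDegree := by rw [hroots, hcard, hdeg]
    have h := Polynomial.coeff_eq_esymm_roots_of_card hfcard (k := n - m) (by rw [hdeg]; omega)
    rw [hdeg, hroots, hmonic.leadingCoeff] at h
    have hd2 : n - (n - m) = m := by omega
    rw [hd2] at h
    rw [h]; ring
  have hder : g.coeff (n-1-m) = f.coeff (n-1-m+1) * ((n-1-m : ℕ) + 1 : ℝ) :=
    Polynomial.coeff_derivative f (n-1-m)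
  have hd3 : n - 1 - m + 1 = n - m := by omega
  rw [hd3] at hder
  rw [hkey, hfc] at hder
  have hcast : ((n-1-m : ℕ) + 1 : ℝ) = ((n - m : ℕ) : ℝ) := by
    rw [← hd3]; push_cast; ring
  rw [hcast] at hder
  have hsign : ((-1:ℝ)^m) ≠ 0 := by positivity
  apply mul_left_cancel₀ hsign
  calc (-1:ℝ)^m * ((n:ℝ) * g.roots.esymm m)
      = (n:ℝ) * ((-1:ℝ)^m * g.roots.esymm m) := by ring
    _ = (-1:ℝ)^m * s.esymm m * ((n - m : ℕ) : ℝ) := by rw [← hder]; ring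
    _ = (-1:ℝ)^m * (((n - m : ℕ) : ℝ) * s.esymm m) := by ring

lemma esymm_eq_esym (s : Multiset ℝ) (f : Fin (Multiset.card s) → ℝ)
    (hf : (Finset.univ.val.map f) = s) (m : ℕ) :
    s.esymm m = esym (Multiset.card s) m f := by
  conv_lhs => rw [← hf]
  rw [Finset.esymm_map_val]; rfl

lemma newton_base (s : Multiset ℝ) (m : ℕ) (hm : 1 ≤ m) (hc : Multiset.card s = m + 1) :
    s.esymm (m+1) / ((Multiset.card s).choose (m+1) : ℝ)
      * (s.esymm (m-1) / ((Multiset.card s).choose (m-1) : ℝ))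
      ≤ (s.esymm m / ((Multiset.card s).choose m : ℝ))^2 := by
  obtain ⟨f, hf⟩ := exists_fn s
  have e1 : s.esymm (m+1) = esym (Multiset.card s) (Multiset.card s) f := by
    rw [esymm_eq_esym s f hf]; congr 1; omega
  have e2 : s.esymm (m-1) = esym (Multiset.card s) (Multiset.card s - 2) f := by
    rw [esymm_eq_esym s f hf]; congr 1; omega
  have e3 : s.esymm m = esym (Multiset.card s) (Multiset.card s - 1) f := by
    rw [esymm_eq_esym s f hf]; congr 1; omega
  have htop := newton_top f (by omega)
  set n := Multiset.card s with hn
  have hn2 : 2 ≤ n := by omega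
  have hC1 : n.choose (m+1) = 1 := by rw [hc]; exact Nat.choose_self _
  have hC2 : n.choose m = n := by
    rw [hc]; exact Nat.succ_sub_one (m+1) ▸ (Nat.choose_succ_self_right m)
  have hC3 : 2 * n.choose (m-1) = n * (n-1) := by
    have hsym : n.choose (m-1) = n.choose 2 := by
      have : m - 1 = n - 2 := by omega
      rw [this, Nat.choose_symm (by omega : 2 ≤ n)]
    have h := Nat.add_one_mul_choose_eq (n-1) 1
    rw [Nat.choose_one_right] at h
    have hs : n - 1 + 1 = n := by omega
    rw [hs] at h
    norm_num at h
    rw [hsym]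
    omega
  have hC3R : 2 * ((n.choose (m-1) : ℕ) : ℝ) = (n:ℝ) * ((n:ℝ) - 1) := by
    have := congrArg (Nat.cast : ℕ → ℝ) hC3
    push_cast [Nat.cast_sub (by omega : 1 ≤ n)] at this
    linarith [this]
  have hc3pos : (0:ℝ) < (n.choose (m-1) : ℝ) := by
    exact_mod_cast Nat.choose_pos (by omega : m - 1 ≤ n)
  rw [e1, e2, e3, hC1, hC2]
  rw [Nat.cast_one, div_one, div_pow, ← mul_div_assoc]
  rw [div_le_div_iff₀ hc3pos (by positivity : (0:ℝ) < ((n:ℕ):ℝ)^2)]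
  nlinarith [htop, hC3R, mul_le_mul_of_nonneg_left htop (by positivity : (0:ℝ) ≤ (n:ℝ))]

lemma choose_transfer {n j : ℕ} (hn : 1 ≤ n) (hj : j ≤ n - 1) :
    ((n-1).choose j : ℝ) * n = (n.choose j : ℝ) * ((n - j : ℕ) : ℝ) := by
  have h := Nat.choose_mul_succ_eq (n-1) j
  have hs : n - 1 + 1 = n := by omega
  rw [hs] at h
  exact_mod_cast h

lemma newton_aux : ∀ (d : ℕ) (s : Multiset ℝ) (m : ℕ), 1 ≤ m → Multiset.card s = m + 1 + d →
    s.esymm (m+1) / ((Multiset.card s).choose (m+1) : ℝ)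
      * (s.esymm (m-1) / ((Multiset.card s).choose (m-1) : ℝ))
      ≤ (s.esymm m / ((Multiset.card s).choose m : ℝ))^2 := by
  intro d
  induction d with
  | zero => intro s m hm hc; exact newton_base s m hm (by omega)
  | succ d ih =>
    intro s m hm hc
    set n := Multiset.card s with hn
    obtain ⟨t, htc, htransfer⟩ := exists_shrink (by omega : 1 ≤ n) s rfl
    have key : ∀ j, j ≤ n - 1 → s.esymm j / (n.choose j : ℝ) = t.esymm j / ((n-1).choose j : ℝ) := by
      intro j hj
      have h1 := htransfer j hj
      have h2 := choose_transfer (by omega : 1 ≤ n) hj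
      have hnj : (0:ℝ) < ((n - j : ℕ) : ℝ) := by
        have : 0 < n - j := by omega
        exact_mod_cast this
      have hc1 : (0:ℝ) < (n.choose j : ℝ) := by
        exact_mod_cast Nat.choose_pos (by omega : j ≤ n)
      have hc2 : (0:ℝ) < ((n-1).choose j : ℝ) := by
        exact_mod_cast Nat.choose_pos (by omega : j ≤ n - 1)
      rw [div_eq_div_iff (ne_of_gt hc1) (ne_of_gt hc2)]
      have hnpos : (0:ℝ) < (n:ℝ) := by exact_mod_cast (by omega : 0 < n)
      apply mul_left_cancel₀ (ne_of_gt hnpos)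
      calc (n:ℝ) * (s.esymm j * ((n-1).choose j : ℝ))
          = (((n-1).choose j : ℝ) * n) * s.esymm j := by ring
        _ = ((n.choose j : ℝ) * ((n - j : ℕ) : ℝ)) * s.esymm j := by rw [h2]
        _ = (n.choose j : ℝ) * (((n - j : ℕ) : ℝ) * s.esymm j) := by ring
        _ = (n.choose j : ℝ) * ((n:ℝ) * t.esymm j) := by rw [← h1]
        _ = (n:ℝ) * (t.esymm j * (n.choose j : ℝ)) := by ring
    have hIH := ih t m hm (by omega)
    rw [htc] at hIH
    rw [key (m+1) (by omega), key m (by omega), key (m-1) (by omega)]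
    exact hIH

lemma newton (s : Multiset ℝ) (m : ℕ) (hm : 1 ≤ m) (h : m + 1 ≤ Multiset.card s) :
    s.esymm (m+1) / ((Multiset.card s).choose (m+1) : ℝ)
      * (s.esymm (m-1) / ((Multiset.card s).choose (m-1) : ℝ))
      ≤ (s.esymm m / ((Multiset.card s).choose m : ℝ))^2 :=
  newton_aux (Multiset.card s - (m+1)) s m hm (by omega)


lemma esym_as_esymm (n m : ℕ) (lam : Fin n → ℝ) :
    (Finset.univ.val.map lam).esymm m = esym n m lam :=
  Finset.esymm_map_val lam Finset.univ m

lemma newton_fn {n : ℕ} (lam : Fin n → ℝ) (m : ℕ) (hm : 1 ≤ m) (h : m + 1 ≤ n) :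
    esym n (m+1) lam / (n.choose (m+1) : ℝ) * (esym n (m-1) lam / (n.choose (m-1) : ℝ))
      ≤ (esym n m lam / (n.choose m : ℝ))^2 := by
  have hcard : Multiset.card (Finset.univ.val.map lam) = n := by simp
  have := newton (Finset.univ.val.map lam) m hm (by rw [hcard]; exact h)
  rw [hcard, esym_as_esymm, esym_as_esymm, esym_as_esymm] at this
  exact this


end NMaux

/-- **Generalized Newton–MacLaurin inequality.** For `λ ∈ Γ_k` and integers
`k > l ≥ 0`, `r > s ≥ 0`, `k ≥ r`, `l ≥ s`:
`[(σ_k/C_n^k)/(σ_l/C_n^l)]^{1/(k-l)} ≤ [(σ_r/C_n^r)/(σ_s/C_n^s)]^{1/(r-s)}`. -/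
theorem stmt6 (n k l r s : ℕ) (lam : Fin n → ℝ) (hlam : lam ∈ GCone n k)
    (hlk : l < k) (hsr : s < r) (hrk : r ≤ k) (hsl : s ≤ l) :
    ((esym n k lam / (n.choose k : ℝ)) / (esym n l lam / (n.choose l : ℝ)))
        ^ ((1 : ℝ) / ((k : ℝ) - (l : ℝ)))
      ≤ ((esym n r lam / (n.choose r : ℝ)) / (esym n s lam / (n.choose s : ℝ)))
        ^ ((1 : ℝ) / ((r : ℝ) - (s : ℝ))) := by
  have hlam' : ∀ m, 1 ≤ m → m ≤ k → 0 < esym n m lam := hlam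
  -- k ≤ n
  have hkn : k ≤ n := by
    by_contra hc
    have h0 : esym n (n+1) lam = 0 := by
      unfold esym
      rw [Finset.powersetCard_eq_empty.2 (by simp)]
      simp
    have := hlam' (n+1) (by omega) (by omega)
    rw [h0] at this
    exact lt_irrefl 0 this
  set p : ℕ → ℝ := fun m => esym n m lam / (n.choose m : ℝ) with hp
  have hppos : ∀ m, m ≤ k → 0 < p m := by
    intro m hmk
    rcases Nat.eq_zero_or_pos m with rfl | hm1
    · have h0 : esym n 0 lam = 1 := by
        unfold esym
        rw [Finset.powersetCard_zero]
        simp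
      simp only [hp, h0, Nat.choose_zero_right]
      norm_num
    · apply div_pos (hlam' m hm1 hmk)
      exact_mod_cast Nat.choose_pos (le_trans hmk hkn)
  set Lg : ℕ → ℝ := fun m => Real.log (p m) with hLg
  set dd : ℕ → ℝ := fun m => Lg m - Lg (m-1) with hdd
  have hstep : ∀ m, 1 ≤ m → m + 1 ≤ k → dd (m+1) ≤ dd m := by
    intro m hm hmk
    have hnw := NMaux.newton_fn lam m hm (le_trans hmk hkn)
    have hposa := hppos (m+1) hmk
    have hposb := hppos (m-1) (by omega)
    have hposc := hppos m (by omega)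
    have l1 : Real.log (p (m+1) * p (m-1)) ≤ Real.log ((p m)^2) :=
      Real.log_le_log (mul_pos hposa hposb) hnw
    rw [Real.log_mul (ne_of_gt hposa) (ne_of_gt hposb), Real.log_pow] at l1
    have e1 : dd (m+1) = Lg (m+1) - Lg m := by simp [hdd]
    have e2 : dd m = Lg m - Lg (m-1) := rfl
    have e3 : Lg (m+1) = Real.log (p (m+1)) := rfl
    rw [e1, e2]
    have : (2:ℕ) * Real.log (p m) = 2 * Lg m := by norm_num [hLg]
    simp only [hLg] at *
    push_cast at l1
    linarith
  have hdmono : ∀ a, 1 ≤ a → ∀ b, a ≤ b → b ≤ k → dd b ≤ dd a := by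
    intro a ha b hab
    induction b, hab using Nat.le_induction with
    | base => intro _; exact le_refl _
    | succ b hab ih => intro hbk; exact le_trans (hstep b (by omega) (by omega)) (ih (by omega))
  have htel : ∀ a b : ℕ, a ≤ b → ∑ m ∈ Finset.Ioc a b, dd m = Lg b - Lg a := by
    intro a b hab
    induction b, hab using Nat.le_induction with
    | base => simp
    | succ b hab ih =>
      rw [Finset.sum_Ioc_succ_top hab, ih]
      have : dd (b+1+1-1) = dd (b+1) := by norm_num
      have e : dd (b+1) = Lg (b+1) - Lg b := by simp [hdd]
      rw [e]; ring
  -- interval sums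
  set X1 := ∑ m ∈ Finset.Ioc s r, dd m with hX1
  set X3 := ∑ m ∈ Finset.Ioc l k, dd m with hX3
  set Y := ∑ m ∈ Finset.Ioc r k, dd m with hY
  set Z := ∑ m ∈ Finset.Ioc s l, dd m with hZ
  set X2 := ∑ m ∈ Finset.Ioc s k, dd m with hX2
  have hsplit1 : X1 + Y = X2 := Finset.sum_Ioc_consecutive _ (by omega) (by omega)
  have hsplit2 : Z + X3 = X2 := Finset.sum_Ioc_consecutive _ (by omega) (by omega)
  have c1 : ((r - s : ℕ) : ℝ) = (r:ℝ) - s := by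
    rw [Nat.cast_sub (by omega : s ≤ r)]
  have c2 : ((k - r : ℕ) : ℝ) = (k:ℝ) - r := by
    rw [Nat.cast_sub (by omega : r ≤ k)]
  have c3 : ((k - l : ℕ) : ℝ) = (k:ℝ) - l := by
    rw [Nat.cast_sub (by omega : l ≤ k)]
  have c4 : ((l - s : ℕ) : ℝ) = (l:ℝ) - s := by
    rw [Nat.cast_sub (by omega : s ≤ l)]
  have bound1 : ((r:ℝ) - s) * dd r ≤ X1 := by
    have h := Finset.card_nsmul_le_sum (Finset.Ioc s r) dd (dd r) (fun m hm => by
      rw [Finset.mem_Ioc] at hm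
      exact hdmono m (by omega) r (by omega) (by omega))
    rwa [Nat.card_Ioc, nsmul_eq_mul, c1] at h
  have bound2 : Y ≤ ((k:ℝ) - r) * dd r := by
    have h := Finset.sum_le_card_nsmul (Finset.Ioc r k) dd (dd r) (fun m hm => by
      rw [Finset.mem_Ioc] at hm
      exact hdmono r (by omega) m (by omega) (by omega))
    rwa [Nat.card_Ioc, nsmul_eq_mul, c2] at h
  have bound3 : X3 ≤ ((k:ℝ) - l) * dd (l+1) := by
    have h := Finset.sum_le_card_nsmul (Finset.Ioc l k) dd (dd (l+1)) (fun m hm => by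
      rw [Finset.mem_Ioc] at hm
      exact hdmono (l+1) (by omega) m (by omega) (by omega))
    rwa [Nat.card_Ioc, nsmul_eq_mul, c3] at h
  have bound4 : ((l:ℝ) - s) * dd (l+1) ≤ Z := by
    have h := Finset.card_nsmul_le_sum (Finset.Ioc s l) dd (dd (l+1)) (fun m hm => by
      rw [Finset.mem_Ioc] at hm
      exact hdmono m (by omega) (l+1) (by omega) (by omega))
    rwa [Nat.card_Ioc, nsmul_eq_mul, c4] at h
  have hrs0 : (0:ℝ) ≤ (r:ℝ) - s := by
    have : (s:ℝ) ≤ r := by exact_mod_cast hsr.le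
    linarith
  have hkr0 : (0:ℝ) ≤ (k:ℝ) - r := by
    have : (r:ℝ) ≤ k := by exact_mod_cast hrk
    linarith
  have hkl0 : (0:ℝ) ≤ (k:ℝ) - l := by
    have : (l:ℝ) ≤ k := by exact_mod_cast hlk.le
    linarith
  have hls0 : (0:ℝ) ≤ (l:ℝ) - s := by
    have : (s:ℝ) ≤ l := by exact_mod_cast hsl
    linarith
  have hkspos : (0:ℝ) < (k:ℝ) - s := by
    have : (s:ℝ) < k := by exact_mod_cast lt_of_le_of_lt hsl hlk
    linarith
  have p1 : ((r:ℝ)-s) * Y ≤ ((r:ℝ)-s) * (((k:ℝ)-r) * dd r) :=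
    mul_le_mul_of_nonneg_left bound2 hrs0
  have p2 : ((k:ℝ)-r) * (((r:ℝ)-s) * dd r) ≤ ((k:ℝ)-r) * X1 :=
    mul_le_mul_of_nonneg_left bound1 hkr0
  have ha : ((r:ℝ) - s) * X2 ≤ ((k:ℝ) - s) * X1 := by rw [← hsplit1]; linarith [p1, p2]
  have p3 : ((k:ℝ)-l) * (((l:ℝ)-s) * dd (l+1)) ≤ ((k:ℝ)-l) * Z :=
    mul_le_mul_of_nonneg_left bound4 hkl0
  have p4 : ((l:ℝ)-s) * X3 ≤ ((l:ℝ)-s) * (((k:ℝ)-l) * dd (l+1)) :=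
    mul_le_mul_of_nonneg_left bound3 hls0
  have hb : ((k:ℝ) - s) * X3 ≤ ((k:ℝ) - l) * X2 := by rw [← hsplit2]; linarith [p3, p4]
  have p5 : ((r:ℝ)-s) * (((k:ℝ)-s) * X3) ≤ ((r:ℝ)-s) * (((k:ℝ)-l) * X2) :=
    mul_le_mul_of_nonneg_left hb hrs0
  have p6 : ((k:ℝ)-l) * (((r:ℝ)-s) * X2) ≤ ((k:ℝ)-l) * (((k:ℝ)-s) * X1) :=
    mul_le_mul_of_nonneg_left ha hkl0
  have main : ((r:ℝ)-s) * X3 ≤ ((k:ℝ)-l) * X1 := by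
    have hmul : ((k:ℝ)-s) * (((r:ℝ)-s) * X3) ≤ ((k:ℝ)-s) * (((k:ℝ)-l) * X1) := by
      linarith [p5, p6]
    exact le_of_mul_le_mul_left hmul hkspos
  have hX1v : X1 = Real.log (p r) - Real.log (p s) := by
    have h := htel s r (by omega)
    simp only [hLg] at h
    exact h
  have hX3v : X3 = Real.log (p k) - Real.log (p l) := by
    have h := htel l k (by omega)
    simp only [hLg] at h
    exact h
  have hklpos : (0:ℝ) < (k:ℝ) - l := by
    have : (l:ℝ) < k := by exact_mod_cast hlk
    linarith
  have hrspos : (0:ℝ) < (r:ℝ) - s := by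
    have : (s:ℝ) < r := by exact_mod_cast hsr
    linarith
  have hpk := hppos k le_rfl
  have hpl := hppos l (by omega)
  have hpr := hppos r hrk
  have hps := hppos s (by omega)
  have hpkl : 0 < p k / p l := div_pos hpk hpl
  have hprs : 0 < p r / p s := div_pos hpr hps
  show (p k / p l) ^ ((1:ℝ)/((k:ℝ) - (l:ℝ))) ≤ (p r / p s) ^ ((1:ℝ)/((r:ℝ) - (s:ℝ)))
  rw [Real.rpow_def_of_pos hpkl, Real.rpow_def_of_pos hprs, Real.exp_le_exp,
    Real.log_div (ne_of_gt hpk) (ne_of_gt hpl), Real.log_div (ne_of_gt hpr) (ne_of_gt hps),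
    mul_one_div, mul_one_div, div_le_div_iff₀ hklpos hrspos]
  rw [← hX1v, ← hX3v]
  linarith [main]

end NMproof
end
end

section
/- Let 1 ≤ k < n, let Ω ⊂ ℝ^n, let u ∈ C^2(Ω), set w = √(1+|Du|^2) and let γ = (γ^{ij}) be the symmetric matrix with γ^{ij} = δ_{ij} − u_i u_j/(w(1+w)). If v ∈ C^2(Ω) is (k+1)-convex, i.e. λ(D^2 v(x)) ∈ Γ̄_{k+1} for all x ∈ Ω, then at every x ∈ Ω the symmetric matrix γ (D^2 v) γ satisfies λ(γ (D^2 v) γ) ∈ Γ̄_k, and moreover σ_j(λ(γ (D^2 v) γ)) ≥ w^{−2} σ_j(λ(D^2 v)) for j = 1, …, k. (Geometrically, γ (D^2 v) γ represents ∇²v − ν(v)h, the covariant Hessian of v on the graph M_u minus ν(v) times the second fundamental form, so its eigenvalues lying in Γ̄_k is the assertion λ(∇²v − ν(v)h) ∈ Γ̄_k.) -/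
open scoped BigOperators Topology
open MeasureTheory

noncomputable section

namespace Stmt8Aux
open Polynomial Filter Topology
open Polynomial

/-- real-rooted polynomial -/
def RR (p : ℝ[X]) : Prop := Multiset.card p.roots = p.natDegree

lemma rr_deriv {p : ℝ[X]} (hp : RR p) :
    RR (derivative p) ∧ (derivative p).natDegree = p.natDegree - 1 := by
  have h1 := p.card_roots_le_derivative
  have h2 := (derivative p).card_roots'
  have h3 := p.natDegree_derivative_le
  unfold RR at *
  omega

lemma rr_iter {p : ℝ[X]} (hp : RR p) (s : ℕ) :
    RR (derivative^[s] p) ∧ (derivative^[s] p).natDegree = p.natDegree - s := by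
  induction s with
  | zero => simpa using hp
  | succ m ih =>
    rw [Function.iterate_succ_apply']
    obtain ⟨ih1, ih2⟩ := ih
    obtain ⟨a, b⟩ := rr_deriv ih1
    exact ⟨a, by omega⟩

lemma lead_iter {p : ℝ[X]} (hp : RR p) (hl : 0 < p.leadingCoeff) {s : ℕ}
    (hs : s ≤ p.natDegree) : 0 < (derivative^[s] p).leadingCoeff := by
  have hd := (rr_iter hp s).2
  have : (derivative^[s] p).leadingCoeff = (derivative^[s] p).coeff (p.natDegree - s) := by
    rw [leadingCoeff, hd]
  rw [this, coeff_iterate_derivative, Nat.sub_add_cancel hs, nsmul_eq_mul]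
  have h4 : 0 < (p.natDegree).descFactorial s := Nat.pos_of_ne_zero (fun h => by simpa [Nat.descFactorial_eq_zero_iff_lt, Nat.not_lt.2 hs] using h)
  have h5 : p.coeff p.natDegree = p.leadingCoeff := rfl
  rw [h5]
  positivity
lemma eval_prod_form (s : Multiset ℝ) (c t : ℝ) :
    (C c * (s.map fun r => X - C r).prod).eval t = c * (s.map fun r => t - r).prod := by
  rw [eval_mul, eval_C, eval_multiset_prod]
  simp [Multiset.map_map]

lemma omnibus (s : Multiset ℝ) (c t : ℝ) (hc : 0 < c) (hs : ∀ r ∈ s, r < t) :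
    0 < (C c * (s.map fun r => X - C r).prod).eval t ∧
      (s ≠ 0 → 0 < (derivative (C c * (s.map fun r => X - C r).prod)).eval t) := by
  induction s using Multiset.induction_on with
  | empty => simp [hc]
  | cons a s ih =>
    have ha : a < t := hs a (Multiset.mem_cons_self a s)
    have hs' : ∀ r ∈ s, r < t := fun r hr => hs r (Multiset.mem_cons_of_mem hr)
    obtain ⟨ih1, ih2⟩ := ih hs'
    have key : C c * ((a ::ₘ s).map fun r => X - C r).prod
        = (X - C a) * (C c * (s.map fun r => X - C r).prod) := by
      rw [Multiset.map_cons, Multiset.prod_cons]; ring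
    constructor
    · rw [key, eval_mul]
      have : (0:ℝ) < t - a := by linarith
      have := mul_pos this ih1
      simpa using this
    · intro _
      rw [key, derivative_mul]
      simp only [eval_add, eval_mul]
      rcases eq_or_ne s 0 with rfl | hsne
      · simp [hc]
      · have h2 := ih2 hsne
        have h1 : (0:ℝ) < t - a := by linarith
        have hp : 0 < eval t (Multiset.map (fun r => X - C r) s).prod := by
          rw [eval_mul, eval_C] at ih1
          nlinarith [ih1, hc]
        have e1 : eval t (derivative (X - C a)) = 1 := by simp
        have e2 : eval t (X - C a) = t - a := by simp
        rw [e1, e2, eval_C, one_mul]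
        positivity

lemma factor {p : ℝ[X]} (hp : RR p) :
    p = C p.leadingCoeff * (p.roots.map fun r => X - C r).prod :=
  Splits.eq_prod_roots (splits_iff_card_roots.mpr hp)

lemma eval_pos {p : ℝ[X]} (hp : RR p) (hl : 0 < p.leadingCoeff) {t : ℝ}
    (ht : ∀ r ∈ p.roots, r < t) : 0 < p.eval t := by
  have := (omnibus p.roots p.leadingCoeff t hl ht).1
  rwa [← factor hp] at this

lemma deriv_eval_pos {p : ℝ[X]} (hp : RR p) (hd : 1 ≤ p.natDegree)
    (hl : 0 < p.leadingCoeff) {t : ℝ} (ht : ∀ r ∈ p.roots, r < t) :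
    0 < (derivative p).eval t := by
  have hroots : p.roots ≠ 0 := by
    intro h
    have := hp
    rw [RR, h] at this
    simp at this
    omega
  have := (omnibus p.roots p.leadingCoeff t hl ht).2 hroots
  rwa [← factor hp] at this

lemma lemmaD {g : ℝ[X]} (hg : RR g) (hl : 0 < g.leadingCoeff) (hdeg : 2 ≤ g.natDegree)
    {t₁ : ℝ} (ht₁ : t₁ ∈ (derivative g).roots)
    (hmax : ∀ r ∈ (derivative g).roots, r ≤ t₁) :
    g.eval t₁ ≤ 0 := by
  obtain ⟨hg', hdg'⟩ := rr_deriv hg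
  have hg'0 : derivative g ≠ 0 := by
    intro h
    rw [h, natDegree_zero] at hdg'
    omega
  have ht₁root : eval t₁ (derivative g) = 0 := by
    exact (mem_roots hg'0).mp ht₁
  have hcard : Multiset.card g.roots = g.natDegree := hg
  have hrne : g.roots ≠ 0 := by
    intro h
    rw [h] at hcard
    simp at hcard
    omega
  have hne : g.roots.toFinset.Nonempty := by
    rwa [Multiset.toFinset_nonempty]
  set r₁ := g.roots.toFinset.max' hne with hr₁def
  have hr₁mem : r₁ ∈ g.roots := Multiset.mem_toFinset.mp (g.roots.toFinset.max'_mem hne)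
  have hr₁max : ∀ r ∈ g.roots, r ≤ r₁ := fun r hr =>
    Finset.le_max' _ r (Multiset.mem_toFinset.mpr hr)
  have ht₁r₁ : t₁ ≤ r₁ := by
    by_contra hcon
    push_neg at hcon
    have : ∀ r ∈ g.roots, r < t₁ := fun r hr => lt_of_le_of_lt (hr₁max r hr) hcon
    have := deriv_eval_pos hg (by omega) hl this
    rw [ht₁root] at this
    exact lt_irrefl 0 this
  set s' := g.roots.erase r₁ with hs'def
  have hs'card : Multiset.card s' = g.natDegree - 1 := by
    rw [hs'def, Multiset.card_erase_of_mem hr₁mem, hcard]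
    rfl
  have hs'ne : s' ≠ 0 := by
    intro h
    rw [h] at hs'card
    simp at hs'card
    omega
  have hs'fne : s'.toFinset.Nonempty := by rwa [Multiset.toFinset_nonempty]
  set r₂ := s'.toFinset.max' hs'fne with hr₂def
  have hr₂mem : r₂ ∈ s' := Multiset.mem_toFinset.mp (s'.toFinset.max'_mem hs'fne)
  have hr₂max : ∀ r ∈ s', r ≤ r₂ := fun r hr =>
    Finset.le_max' _ r (Multiset.mem_toFinset.mpr hr)
  have hr₂t₁ : r₂ ≤ t₁ := by
    by_cases hcase : r₁ ∈ s'
    · have hcount : 2 ≤ g.roots.count r₁ := by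
        have h1 := Multiset.count_pos.mpr hcase
        rw [hs'def, Multiset.count_erase_self] at h1
        omega
      rw [count_roots] at hcount
      have h2 : (X - C r₁) ^ 2 ∣ g :=
        dvd_trans (pow_dvd_pow _ hcount) (g.pow_rootMultiplicity_dvd r₁)
      obtain ⟨h, hh⟩ := h2
      have hr₁d : eval r₁ (derivative g) = 0 := by
        rw [hh, derivative_mul, derivative_pow]
        simp
      have hr₁roots' : r₁ ∈ (derivative g).roots := by
        rw [mem_roots hg'0]
        exact hr₁d
      exact le_trans (hr₁max r₂ (Multiset.erase_subset _ _ hr₂mem)) (hmax r₁ hr₁roots')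
    · have hr₂roots : r₂ ∈ g.roots := Multiset.erase_subset _ _ hr₂mem
      have hr₂lt : r₂ < r₁ :=
        lt_of_le_of_ne (hr₁max _ hr₂roots) (fun h => hcase (h ▸ hr₂mem))
      have hgr₂ : eval r₂ g = 0 := (mem_roots (by
        intro h; rw [h] at hrne; simp at hrne)).mp hr₂roots
      have hgr₁ : eval r₁ g = 0 := (mem_roots (by
        intro h; rw [h] at hrne; simp at hrne)).mp hr₁mem
      obtain ⟨z, hz, hz0⟩ := exists_deriv_eq_zero hr₂lt g.continuousOn (by rw [hgr₂, hgr₁])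
      have hzd : eval z (derivative g) = 0 := by
        rw [← Polynomial.deriv]
        exact hz0
      have hzmem : z ∈ (derivative g).roots := by
        rw [mem_roots hg'0]
        exact hzd
      have := hmax z hzmem
      have := hz.1
      linarith
  -- conclude
  have hfact := factor hg
  have hsplit : (g.roots.map fun r => X - C r).prod
      = (X - C r₁) * (s'.map fun r => X - C r).prod := by
    conv_lhs => rw [← Multiset.cons_erase hr₁mem]
    rw [Multiset.map_cons, Multiset.prod_cons]
  have : g.eval t₁ = g.leadingCoeff * ((t₁ - r₁) * (s'.map fun r => t₁ - r).prod) := by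
    conv_lhs => rw [hfact]
    rw [eval_mul, eval_C, hsplit, eval_mul, eval_multiset_prod]
    simp [Multiset.map_map]
  rw [this]
  have h1 : t₁ - r₁ ≤ 0 := by linarith
  have h2 : (0:ℝ) ≤ (s'.map fun r => t₁ - r).prod := by
    apply Multiset.prod_nonneg
    intro x hx
    obtain ⟨r, hr, rfl⟩ := Multiset.mem_map.mp hx
    have := hr₂max r hr
    linarith
  have h3 : 0 ≤ g.leadingCoeff * ((r₁ - t₁) * (s'.map fun r => t₁ - r).prod) :=
    mul_nonneg hl.le (mul_nonneg (by linarith) h2)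
  nlinarith [h3]

lemma iter_deriv_linear_mul (a : ℝ) (q : ℝ[X]) (s : ℕ) :
    derivative^[s+1] ((X + C a) * q)
      = (X + C a) * derivative^[s+1] q + ((s : ℝ[X]) + 1) * derivative^[s] q := by
  induction s with
  | zero =>
    simp only [zero_add, Function.iterate_one, Function.iterate_zero, id_eq, derivative_mul,
      derivative_add, derivative_X, derivative_C, add_zero, one_mul, Nat.cast_zero]
    ring
  | succ m ih =>
    rw [Function.iterate_succ_apply', ih, derivative_add, derivative_mul, derivative_mul]
    rw [show derivative (derivative^[m+1] q) = derivative^[m+1+1] q from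
      (Function.iterate_succ_apply' derivative (m+1) q).symm]
    rw [show derivative (derivative^[m] q) = derivative^[m+1] q from
      (Function.iterate_succ_apply' derivative m q).symm]
    have e1 : derivative (X + C a) = 1 := by simp
    have e2 : derivative ((m : ℝ[X]) + 1) = 0 := by simp
    rw [e1, e2]
    push_cast
    ring

lemma maxroot_neg {q : ℝ[X]} (hq : RR q) (hlq : 0 < q.leadingCoeff) (a : ℝ) (s : ℕ)
    (hdeg : s + 1 ≤ q.natDegree)
    (hpos : ∀ t : ℝ, 0 ≤ t → 0 < (derivative^[s] ((X + C a) * q)).eval t) :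
    ∀ r ∈ (derivative^[s] q).roots, r < 0 := by
  obtain ⟨hqs, hqsdeg⟩ := rr_iter hq s
  have hdq : 1 ≤ (derivative^[s] q).natDegree := by omega
  have hqs0 : derivative^[s] q ≠ 0 := by
    intro h
    rw [h, natDegree_zero] at hqsdeg
    omega
  have hrne : (derivative^[s] q).roots ≠ 0 := by
    intro h
    have := hqs
    rw [RR, h] at this
    simp at this
    omega
  have hne : (derivative^[s] q).roots.toFinset.Nonempty := by
    rwa [Multiset.toFinset_nonempty]
  set t₁ := (derivative^[s] q).roots.toFinset.max' hne with ht₁def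
  have ht₁mem : t₁ ∈ (derivative^[s] q).roots :=
    Multiset.mem_toFinset.mp ((derivative^[s] q).roots.toFinset.max'_mem hne)
  have ht₁max : ∀ r ∈ (derivative^[s] q).roots, r ≤ t₁ := fun r hr =>
    Finset.le_max' _ r (Multiset.mem_toFinset.mpr hr)
  have ht₁neg : t₁ < 0 := by
    by_contra hcon
    push_neg at hcon
    have hzero : eval t₁ (derivative^[s] q) = 0 := (mem_roots hqs0).mp ht₁mem
    cases s with
    | zero =>
      have hp := hpos t₁ hcon
      simp only [Function.iterate_zero, id_eq] at hp hzero
      rw [eval_mul, hzero, mul_zero] at hp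
      exact lt_irrefl 0 hp
    | succ m =>
      have hleib := iter_deriv_linear_mul a q m
      have hg : RR (derivative^[m] q) := (rr_iter hq m).1
      have hgdeg : 2 ≤ (derivative^[m] q).natDegree := by
        have := (rr_iter hq m).2
        omega
      have hgl : 0 < (derivative^[m] q).leadingCoeff := lead_iter hq hlq (by omega)
      have hgd : derivative (derivative^[m] q) = derivative^[m+1] q :=
        (Function.iterate_succ_apply' derivative m q).symm
      have hD : (derivative^[m] q).eval t₁ ≤ 0 := by
        apply lemmaD hg hgl hgdeg
        · rw [hgd]; exact ht₁mem
        · rw [hgd]; exact ht₁max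
      have hp := hpos t₁ hcon
      rw [hleib, eval_add, eval_mul, eval_mul, hzero, mul_zero, zero_add] at hp
      simp only [eval_add, eval_natCast, eval_one] at hp
      nlinarith [hp, hD, (Nat.cast_nonneg m : (0:ℝ) ≤ (m:ℝ))]
  intro r hr
  exact lt_of_le_of_lt (ht₁max r hr) ht₁neg

def esymDel (n : ℕ) (i : Fin n) (j : ℕ) (lam : Fin n → ℝ) : ℝ :=
  ∑ T ∈ (Finset.univ.erase i).powersetCard j, ∏ l ∈ T, lam l

lemma esym_zero (n : ℕ) (lam : Fin n → ℝ) : esym n 0 lam = 1 := by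
  simp [esym]

lemma eval_pos_of_coeff_pos {p : ℝ[X]} (h : ∀ d, d ≤ p.natDegree → 0 < p.coeff d) {t : ℝ}
    (ht : 0 ≤ t) : 0 < p.eval t := by
  rw [eval_eq_sum_range]
  apply Finset.sum_pos'
  · intro i hi
    rw [Finset.mem_range, Nat.lt_succ_iff] at hi
    exact mul_nonneg (h i hi).le (pow_nonneg ht i)
  · exact ⟨0, Finset.mem_range.2 (Nat.succ_pos _), by
      simpa using (h 0 (Nat.zero_le _))⟩

lemma prodlin_monic {ι : Type*} [DecidableEq ι] (s : Finset ι) (f : ι → ℝ) :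
    (∏ l ∈ s, (X + C (f l))).Monic :=
  monic_prod_of_monic _ _ fun l _ => monic_X_add_C (f l)

lemma prodlin_natDegree {ι : Type*} [DecidableEq ι] (s : Finset ι) (f : ι → ℝ) :
    (∏ l ∈ s, (X + C (f l))).natDegree = s.card := by
  rw [natDegree_prod _ _ (fun l _ => X_add_C_ne_zero (f l))]
  simp [natDegree_X_add_C]

lemma prodlin_RR {ι : Type*} [DecidableEq ι] (s : Finset ι) (f : ι → ℝ) :
    RR (∏ l ∈ s, (X + C (f l))) := by
  have hne : (∏ l ∈ s, (X + C (f l))) ≠ 0 :=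
    (prodlin_monic s f).ne_zero
  rw [RR, prodlin_natDegree, roots_prod _ _ hne]
  rw [Multiset.card_bind]
  have hxc : ∀ a : ℝ, (X + C a).roots = {-a} := by
    intro a
    have : (X + C a : ℝ[X]) = X - C (-a) := by
      rw [map_neg, sub_neg_eq_add]
    rw [this, roots_X_sub_C]
  have : (Multiset.map (Multiset.card ∘ fun l => (X + C (f l)).roots) s.val)
      = Multiset.map (fun _ => 1) s.val := by
    apply Multiset.map_congr rfl
    intro l _
    simp [Function.comp, hxc]
  rw [this]
  simp

lemma esymDel_pos {n : ℕ} (lam : Fin n → ℝ) (i : Fin n) (j : ℕ) (hj : 1 ≤ j) (hjn : j + 1 ≤ n)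
    (hlam : ∀ m, 1 ≤ m → m ≤ j + 1 → 0 < esym n m lam) :
    0 < esymDel n i j lam := by
  classical
  set q : ℝ[X] := ∏ l ∈ Finset.univ.erase i, (X + C (lam l)) with hqdef
  set p : ℝ[X] := ∏ l ∈ (Finset.univ : Finset (Fin n)), (X + C (lam l)) with hpdef
  have hcardq : (Finset.univ.erase i).card = n - 1 := by
    rw [Finset.card_erase_of_mem (Finset.mem_univ i)]
    simp
  have hpq : p = (X + C (lam i)) * q := by
    rw [hpdef, hqdef, ← Finset.mul_prod_erase _ _ (Finset.mem_univ i)]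
  have hqRR : RR q := prodlin_RR _ _
  have hqdeg : q.natDegree = n - 1 := by rw [hqdef, prodlin_natDegree, hcardq]
  have hqmonic : q.Monic := prodlin_monic _ _
  have hpRR : RR p := prodlin_RR _ _
  have hpdeg : p.natDegree = n := by
    rw [hpdef, prodlin_natDegree]
    simp
  have hcoeffp : ∀ kk, kk ≤ n → p.coeff kk = esym n (n - kk) lam := by
    intro kk hkk
    rw [hpdef]
    have := Finset.prod_X_add_C_coeff (Finset.univ : Finset (Fin n)) lam
      (k := kk) (by simpa using hkk)
    rw [this]
    simp [esym]
  have hcoeffq : ∀ kk, kk ≤ n - 1 → q.coeff kk = esymDel n i (n - 1 - kk) lam := by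
    intro kk hkk
    rw [hqdef]
    have := Finset.prod_X_add_C_coeff (Finset.univ.erase i) lam
      (k := kk) (by rw [hcardq]; exact hkk)
    rw [this, hcardq]
    simp [esymDel]
  set s : ℕ := n - 1 - j with hsdef
  have hs1 : s + 1 ≤ n - 1 := by omega
  have hpos : ∀ t : ℝ, 0 ≤ t → 0 < (derivative^[s] p).eval t := by
    intro t ht
    apply eval_pos_of_coeff_pos _ ht
    intro d hd
    have hdn : (derivative^[s] p).natDegree = n - s := by
      rw [(rr_iter hpRR s).2, hpdeg]
    rw [hdn] at hd
    rw [coeff_iterate_derivative]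
    have hds : d + s ≤ n := by omega
    rw [hcoeffp _ hds]
    have hdesc : 0 < (d + s).descFactorial s :=
      Nat.pos_of_ne_zero (fun h => by
        rw [Nat.descFactorial_eq_zero_iff_lt] at h
        omega)
    have hesym : 0 < esym n (n - (d + s)) lam := by
      rcases Nat.eq_zero_or_pos (n - (d + s)) with h0 | hpos'
      · rw [h0, esym_zero]
        norm_num
      · exact hlam _ hpos' (by omega)
    rw [nsmul_eq_mul]
    positivity
  have hroots := maxroot_neg hqRR (by rw [hqmonic.leadingCoeff]; norm_num) (lam i) s
    (by omega) (by rw [← hpq]; exact hpos)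
  obtain ⟨hqsRR, hqsdeg⟩ := rr_iter hqRR s
  have hqsdeg' : (derivative^[s] q).natDegree = j := by omega
  have hlead : 0 < (derivative^[s] q).leadingCoeff :=
    lead_iter hqRR (by rw [hqmonic.leadingCoeff]; norm_num) (by omega)
  have heval : 0 < (derivative^[s] q).eval 0 := eval_pos hqsRR hlead hroots
  rw [← coeff_zero_eq_eval_zero, coeff_iterate_derivative, zero_add] at heval
  rw [hcoeffq s (by omega)] at heval
  have : n - 1 - s = j := by omega
  rw [this, nsmul_eq_mul] at heval
  nlinarith [heval, (Nat.cast_nonneg ((0 + s).descFactorial s) : (0:ℝ) ≤ _)]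

lemma esym_continuous (n m : ℕ) : Continuous fun lam : Fin n → ℝ => esym n m lam := by
  unfold esym
  exact continuous_finset_sum _ fun T _ => continuous_finset_prod _ fun l _ => continuous_apply l

lemma esymDel_continuous (n : ℕ) (i : Fin n) (j : ℕ) :
    Continuous fun lam : Fin n → ℝ => esymDel n i j lam := by
  unfold esymDel
  exact continuous_finset_sum _ fun T _ => continuous_finset_prod _ fun l _ => continuous_apply l

lemma nonneg_of_mem_closure {n : ℕ} {S : Set (Fin n → ℝ)} {f : (Fin n → ℝ) → ℝ}
    (hf : Continuous f) (h : ∀ y ∈ S, 0 < f y) {x : Fin n → ℝ} (hx : x ∈ closure S) :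
    0 ≤ f x := by
  obtain ⟨seq, hmem, hlim⟩ := mem_closure_iff_seq_limit.mp hx
  exact ge_of_tendsto' ((hf.continuousAt.tendsto).comp hlim) (fun j => (h _ (hmem j)).le)
    |>.trans_eq rfl

lemma iter_deriv_comp_X_add_C (P : ℝ[X]) (ε : ℝ) (s : ℕ) :
    derivative^[s] (P.comp (X + C ε)) = (derivative^[s] P).comp (X + C ε) := by
  induction s with
  | zero => simp
  | succ m ih =>
    rw [Function.iterate_succ_apply', ih, derivative_comp]
    simp [Function.iterate_succ_apply']

lemma esym_shift_pos {n m : ℕ} (lam : Fin n → ℝ) (hm1 : 1 ≤ m) (hmn : m ≤ n)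
    (h : ∀ i, 1 ≤ i → i ≤ m → 0 ≤ esym n i lam) {ε : ℝ} (hε : 0 < ε) :
    0 < esym n m (fun l => lam l + ε) := by
  classical
  set P : ℝ[X] := ∏ l ∈ (Finset.univ : Finset (Fin n)), (X + C (lam l)) with hPdef
  set Pε : ℝ[X] := ∏ l ∈ (Finset.univ : Finset (Fin n)), (X + C (lam l + ε)) with hPεdef
  have hPdeg : P.natDegree = n := by rw [hPdef, prodlin_natDegree]; simp
  have hPRR : RR P := prodlin_RR _ _
  have hcomp : Pε = P.comp (X + C ε) := by
    apply Polynomial.funext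
    intro t
    rw [eval_comp]
    simp only [eval_add, eval_X, eval_C]
    rw [hPdef, hPεdef, eval_prod, eval_prod]
    apply Finset.prod_congr rfl
    intro l _
    simp only [eval_add, eval_X, eval_C]
    ring
  set s : ℕ := n - m with hsdef
  have hcoeffP : ∀ kk, kk ≤ n → P.coeff kk = esym n (n - kk) lam := by
    intro kk hkk
    rw [hPdef]
    have := Finset.prod_X_add_C_coeff (Finset.univ : Finset (Fin n)) lam
      (k := kk) (by simpa using hkk)
    rw [this]
    simp [esym]
  have hcoeffPε : Pε.coeff s = esym n m (fun l => lam l + ε) := by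
    rw [hPεdef]
    have := Finset.prod_X_add_C_coeff (Finset.univ : Finset (Fin n))
      (fun l => lam l + ε) (k := s) (by simp; omega)
    rw [this]
    have : n - s = m := by omega
    simp [esym, this]
  have h1 : (derivative^[s] Pε).coeff 0 = (0 + s).descFactorial s • Pε.coeff (0 + s) :=
    coeff_iterate_derivative _ _
  rw [zero_add] at h1
  have h2 : (derivative^[s] Pε).coeff 0 = (derivative^[s] P).eval ε := by
    rw [coeff_zero_eq_eval_zero, hcomp, iter_deriv_comp_X_add_C, eval_comp]
    simp
  have hchain : ((0 + s).descFactorial s : ℝ) * esym n m (fun l => lam l + ε)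
      = (derivative^[s] P).eval ε := by
    rw [zero_add, ← hcoeffPε, ← nsmul_eq_mul, ← h1, h2]
  have hevalpos : 0 < (derivative^[s] P).eval ε := by
    rw [eval_eq_sum_range]
    have hdn : (derivative^[s] P).natDegree = m := by
      rw [(rr_iter hPRR s).2, hPdeg]; omega
    rw [hdn]
    apply Finset.sum_pos'
    · intro d hd
      rw [Finset.mem_range, Nat.lt_succ_iff] at hd
      apply mul_nonneg _ (pow_nonneg hε.le d)
      rw [coeff_iterate_derivative, hcoeffP _ (by omega), nsmul_eq_mul]
      have hesym : 0 ≤ esym n (n - (d + s)) lam := by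
        rcases Nat.eq_zero_or_pos (n - (d + s)) with h0 | hpos'
        · rw [h0, esym_zero]; norm_num
        · exact h _ hpos' (by omega)
      positivity
    · refine ⟨m, Finset.mem_range.2 (Nat.lt_succ_self m), ?_⟩
      rw [coeff_iterate_derivative, hcoeffP _ (by omega), nsmul_eq_mul]
      have : n - (m + s) = 0 := by omega
      rw [this, esym_zero, mul_one]
      have hdesc : 0 < (m + s).descFactorial s :=
        Nat.pos_of_ne_zero (fun hcon => by
          rw [Nat.descFactorial_eq_zero_iff_lt] at hcon
          omega)
      positivity
  have hdesc : 0 < (0 + s).descFactorial s :=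
    Nat.pos_of_ne_zero (fun hcon => by
      rw [Nat.descFactorial_eq_zero_iff_lt] at hcon
      omega)
  nlinarith [hevalpos, hchain, (Nat.one_le_cast.mpr hdesc : (1:ℝ) ≤ ((0 + s).descFactorial s : ℝ))]

lemma mem_closure_GCone {n kk : ℕ} (hkk : 1 ≤ kk) (hkn : kk ≤ n) (lam : Fin n → ℝ)
    (h : ∀ m, 1 ≤ m → m ≤ kk → 0 ≤ esym n m lam) :
    lam ∈ closure (GCone n kk) := by
  rw [mem_closure_iff_seq_limit]
  refine ⟨fun j => fun l => lam l + (1 : ℝ)/(j+1), fun j => ?_, ?_⟩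
  · intro m hm1 hmk
    exact esym_shift_pos lam hm1 (le_trans hmk hkn)
      (fun i h1 h2 => h i h1 (le_trans h2 hmk)) (by positivity)
  · rw [tendsto_pi_nhds]
    intro l
    have h0 : Tendsto (fun j : ℕ => (1:ℝ)/(j+1)) atTop (𝓝 0) :=
      tendsto_one_div_add_atTop_nhds_zero_nat
    simpa using tendsto_const_nhds.add h0


section MatrixPart
open Matrix Polynomial
variable {n : ℕ}

lemma det_tsub {n : ℕ} (M : Matrix (Fin n) (Fin n) ℝ) (hM : M.IsHermitian) (t : ℝ) :
    (t • (1 : Matrix (Fin n) (Fin n) ℝ) - M).det = ∏ i, (t - hM.eigenvalues i) := by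
  have hspec := hM.spectral_theorem
  set U : Matrix (Fin n) (Fin n) ℝ := (hM.eigenvectorUnitary : Matrix (Fin n) (Fin n) ℝ) with hUdef
  have h1 : U * star U = 1 := Matrix.mem_unitaryGroup_iff.mp hM.eigenvectorUnitary.2
  have h2 : star U * U = 1 := Matrix.mem_unitaryGroup_iff'.mp hM.eigenvectorUnitary.2
  have hdiag : (Matrix.diagonal ((RCLike.ofReal ∘ hM.eigenvalues) : Fin n → ℝ))
      = Matrix.diagonal hM.eigenvalues := by congr 1
  have hsmul : (t • (1 : Matrix (Fin n) (Fin n) ℝ) - diagonal hM.eigenvalues)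
      = diagonal (fun i => t - hM.eigenvalues i) := by
    ext i j
    by_cases h : i = j
    · subst h; simp
    · simp [Matrix.diagonal_apply_ne _ h, Matrix.one_apply_ne h]
  have key : t • (1 : Matrix (Fin n) (Fin n) ℝ) - M
      = U * (t • (1 : Matrix (Fin n) (Fin n) ℝ) - diagonal hM.eigenvalues) * star U := by
    have e1 : U * (t • (1 : Matrix (Fin n) (Fin n) ℝ)) * star U
        = t • (1 : Matrix (Fin n) (Fin n) ℝ) := by
      rw [Matrix.mul_smul, Matrix.mul_one, Matrix.smul_mul, h1]
    rw [Matrix.mul_sub, Matrix.sub_mul, e1, ← hdiag]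
    congr 1
  rw [key, det_mul, det_mul, hsmul, det_diagonal]
  have hdetU : U.det * (star U).det = 1 := by rw [← det_mul, h1, det_one]
  linear_combination (∏ i, (t - hM.eigenvalues i)) * hdetU




variable {n : ℕ}

lemma vmv_mul_vmv (a b c d : Fin n → ℝ) :
    vecMulVec a b * vecMulVec c d = (b ⬝ᵥ c) • vecMulVec a d := by
  ext i j
  simp only [Matrix.mul_apply, vecMulVec_apply, Matrix.smul_apply, dotProduct, smul_eq_mul,
    Finset.sum_mul]
  apply Finset.sum_congr rfl
  intro l _
  ring

lemma one_add_smul_mul (V : Matrix (Fin n) (Fin n) ℝ) (s a b : ℝ) (hV : V * V = s • V) :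
    (1 + a • V) * (1 + b • V) = 1 + (a + b + a * b * s) • V := by
  rw [mul_add, add_mul, add_mul, mul_one, one_mul, Matrix.mul_one, Matrix.smul_mul,
    Matrix.mul_smul, smul_smul, hV, smul_smul]
  module

lemma smul_vmv (c : ℝ) (a b : Fin n → ℝ) :
    vecMulVec (c • a) b = c • vecMulVec a b := by
  ext i j
  simp [vecMulVec_apply, mul_assoc]

lemma G_sandwich (q : Fin n → ℝ) (w : ℝ) (hw : 1 ≤ w) (hqq : q ⬝ᵥ q = w ^ 2 - 1) :
    (1 - (w * (1+w))⁻¹ • vecMulVec q q) * (1 + vecMulVec q q)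
      * (1 - (w * (1+w))⁻¹ • vecMulVec q q) = 1 := by
  have hw0 : w ≠ 0 := by linarith
  have h1w : (1:ℝ) + w ≠ 0 := by linarith
  have hVV : vecMulVec q q * vecMulVec q q = (w^2-1) • vecMulVec q q := by
    rw [vmv_mul_vmv, hqq]
  have sub_eq : (1 : Matrix (Fin n) (Fin n) ℝ) - (w * (1+w))⁻¹ • vecMulVec q q
      = 1 + (-(w * (1+w))⁻¹) • vecMulVec q q := by
    rw [neg_smul, sub_eq_add_neg]
  have e0 : (1 : Matrix (Fin n) (Fin n) ℝ) + vecMulVec q q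
      = 1 + (1:ℝ) • vecMulVec q q := by rw [one_smul]
  rw [sub_eq, e0, one_add_smul_mul _ _ _ _ hVV, one_add_smul_mul _ _ _ _ hVV,
    add_eq_left]
  apply smul_eq_zero_of_left
  field_simp
  ring

lemma det_one_sub_smul_vmv (q : Fin n → ℝ) (c : ℝ) :
    (1 - c • vecMulVec q q).det = 1 - c * (q ⬝ᵥ q) := by
  have h : (1 : Matrix (Fin n) (Fin n) ℝ) - c • vecMulVec q q
      = 1 + Matrix.replicateCol (Fin 1) ((-c) • q) * Matrix.replicateRow (Fin 1) q := by
    erw [← vecMulVec_eq (Fin 1), smul_vmv, neg_smul, ← sub_eq_add_neg]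
  rw [h]
  erw [det_one_add_replicateCol_mul_replicateRow (ι := Fin 1)]
  rw [ dotProduct_smul]
  simp only [smul_eq_mul]
  ring

lemma det_diag_rank1 (β q : Fin n → ℝ) (t : ℝ) (hne : ∀ i, t - β i ≠ 0) :
    (t • ((1 : Matrix (Fin n) (Fin n) ℝ) + vecMulVec q q) - Matrix.diagonal β).det
      = (∏ i, (t - β i)) + t * ∑ i, (q i)^2 * ∏ l ∈ Finset.univ.erase i, (t - β l) := by
  classical
  set f : Fin n → ℝ := fun i => t - β i with hf
  have hM : t • ((1 : Matrix (Fin n) (Fin n) ℝ) + vecMulVec q q) - Matrix.diagonal β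
      = Matrix.diagonal f
        * (1 + Matrix.replicateCol (Fin 1) (fun i => (f i)⁻¹ * (t * q i)) * Matrix.replicateRow (Fin 1) q) := by
    erw [← vecMulVec_eq (Fin 1)]
    ext i j
    by_cases hij : i = j
    · subst hij
      simp only [Matrix.sub_apply, Matrix.smul_apply, Matrix.add_apply, Matrix.one_apply_eq,
        vecMulVec_apply, Matrix.diagonal_apply_eq, Matrix.mul_apply, Matrix.diagonal,
        Matrix.of_apply, smul_eq_mul]
      rw [Finset.sum_eq_single i (by intro b _ hb; simp [Ne.symm hb]) (by simp)]
      simp only [if_pos rfl]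
      have hfi : f i ≠ 0 := hne i
      simp only [if_true, Matrix.one_apply_eq] at *
      field_simp
      ring
    · simp only [Matrix.sub_apply, Matrix.smul_apply, Matrix.add_apply, Matrix.one_apply_ne hij,
        vecMulVec_apply, Matrix.diagonal_apply_ne _ hij, Matrix.mul_apply, Matrix.diagonal,
        Matrix.of_apply, smul_eq_mul]
      rw [Finset.sum_eq_single i (by intro b _ hb; simp [Ne.symm hb]) (by simp)]
      simp only [if_pos rfl, Matrix.one_apply_ne hij]
      rw [if_neg hij]
      have hfi : f i ≠ 0 := hne i
      simp only [if_true, Matrix.one_apply_eq] at *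
      field_simp
      ring
  rw [hM, det_mul, det_diagonal]
  erw [det_one_add_replicateCol_mul_replicateRow (ι := Fin 1)]
  have hdot : (q ⬝ᵥ fun i => (f i)⁻¹ * (t * q i)) = ∑ i, q i * ((f i)⁻¹ * (t * q i)) := rfl
  rw [hdot, mul_add, mul_one, Finset.mul_sum]
  congr 1
  rw [Finset.mul_sum]
  apply Finset.sum_congr rfl
  intro i _
  rw [← Finset.mul_prod_erase _ f (Finset.mem_univ i)]
  have hfi : f i ≠ 0 := hne i
  field_simp



-- step 1: conjugation setup
lemma conj_setup (B : Matrix (Fin n) (Fin n) ℝ) (hB : B.IsHermitian)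
    (p : Fin n → ℝ) (c : ℝ) :
    ∃ vq : Fin n → ℝ, vq ⬝ᵥ vq = p ⬝ᵥ p ∧
      ∀ t : ℝ, ((t • (1 : Matrix (Fin n) (Fin n) ℝ)
          - (1 - c • vecMulVec vq vq) * Matrix.diagonal hB.eigenvalues
            * (1 - c • vecMulVec vq vq)).det
        = (t • (1 : Matrix (Fin n) (Fin n) ℝ)
          - (1 - c • vecMulVec p p) * B * (1 - c • vecMulVec p p)).det) := by
  set U : Matrix (Fin n) (Fin n) ℝ := (hB.eigenvectorUnitary : Matrix (Fin n) (Fin n) ℝ)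
    with hUdef
  have h1 : U * star U = 1 := Matrix.mem_unitaryGroup_iff.mp hB.eigenvectorUnitary.2
  have h2 : star U * U = 1 := Matrix.mem_unitaryGroup_iff'.mp hB.eigenvectorUnitary.2
  have hdiag : (Matrix.diagonal ((RCLike.ofReal ∘ hB.eigenvalues) : Fin n → ℝ))
      = Matrix.diagonal hB.eigenvalues := by congr 1
  have hspec : B = U * Matrix.diagonal hB.eigenvalues * star U := by
    rw [← hdiag]; exact hB.spectral_theorem
  have hUU' : ∀ X : Matrix (Fin n) (Fin n) ℝ, U * (star U * X) = X := fun X => by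
    rw [← Matrix.mul_assoc, h1, Matrix.one_mul]
  have hU'U : ∀ X : Matrix (Fin n) (Fin n) ℝ, star U * (U * X) = X := fun X => by
    rw [← Matrix.mul_assoc, h2, Matrix.one_mul]
  refine ⟨fun i => ∑ a, U a i * p a, ?_, ?_⟩
  · -- dot product preserved
    have hUU : ∀ a b, (∑ j, U a j * U b j) = if a = b then (1:ℝ) else 0 := by
      intro a b
      have := congrFun (congrFun h1 a) b
      simp only [Matrix.mul_apply, Matrix.one_apply, Matrix.star_apply, star_trivial] at this
      exact this
    simp only [dotProduct]
    calc ∑ j, (∑ a, U a j * p a) * (∑ b, U b j * p b)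
        = ∑ j, ∑ a, ∑ b, (U a j * U b j) * (p a * p b) := by
          apply Finset.sum_congr rfl
          intro j _
          rw [Finset.sum_mul_sum]
          apply Finset.sum_congr rfl; intro a _
          apply Finset.sum_congr rfl; intro b _
          ring
      _ = ∑ a, ∑ b, (∑ j, U a j * U b j) * (p a * p b) := by
          rw [Finset.sum_comm]
          apply Finset.sum_congr rfl
          intro a _
          rw [Finset.sum_comm]
          apply Finset.sum_congr rfl
          intro b _
          rw [Finset.sum_mul]
      _ = ∑ a, p a * p a := by
          apply Finset.sum_congr rfl
          intro a _
          rw [Finset.sum_eq_single a]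
          · rw [hUU a a, if_pos rfl, one_mul]
          · intro b _ hb
            rw [hUU a b, if_neg (Ne.symm hb), zero_mul]
          · intro h; exact absurd (Finset.mem_univ a) h
  · intro t
    set vq : Fin n → ℝ := fun i => ∑ a, U a i * p a with hvqdef
    have hUVU : star U * vecMulVec p p * U = vecMulVec vq vq := by
      ext i j
      simp only [Matrix.mul_apply, vecMulVec_apply, Matrix.star_apply, star_trivial]
      have e1 : ∀ b, (∑ a, U a i * (p a * p b)) = vq i * p b := fun b => by
        rw [hvqdef]
        simp only
        rw [Finset.sum_mul]
        exact Finset.sum_congr rfl fun a _ => by ring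
      calc (∑ b, (∑ a, U a i * (p a * p b)) * U b j)
          = ∑ b, (vq i) * (U b j * p b) := by
            apply Finset.sum_congr rfl
            intro b _
            rw [e1 b]
            ring
        _ = vq i * ∑ b, U b j * p b := by rw [Finset.mul_sum]
        _ = vq i * vq j := rfl
    have hGconj : star U * (1 - c • vecMulVec p p) * U = 1 - c • vecMulVec vq vq := by
      rw [Matrix.mul_sub, Matrix.mul_one, Matrix.sub_mul, h2, Matrix.mul_smul,
        Matrix.smul_mul, hUVU]
    have hBdiag : star U * B * U = Matrix.diagonal hB.eigenvalues := by
      conv_lhs => rw [hspec]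
      simp only [Matrix.mul_assoc, hU'U, h2, Matrix.mul_one]
    have key : t • (1 : Matrix (Fin n) (Fin n) ℝ)
        - (1 - c • vecMulVec vq vq) * Matrix.diagonal hB.eigenvalues
          * (1 - c • vecMulVec vq vq)
        = star U * (t • (1 : Matrix (Fin n) (Fin n) ℝ)
            - (1 - c • vecMulVec p p) * B * (1 - c • vecMulVec p p)) * U := by
      conv_rhs => rw [Matrix.mul_sub, Matrix.sub_mul]
      congr 1
      · have e : star U * (t • (1 : Matrix (Fin n) (Fin n) ℝ)) * U
            = t • (1 : Matrix (Fin n) (Fin n) ℝ) := by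
          rw [Matrix.mul_smul, Matrix.mul_one, Matrix.smul_mul, h2]
        exact e.symm
      · rw [← hGconj, ← hBdiag]
        simp only [Matrix.mul_assoc, hUU', hU'U]
    rw [key, det_mul, det_mul]
    have hdet : (star U).det * U.det = 1 := by rw [← det_mul, h2, det_one]
    linear_combination ((t • (1 : Matrix (Fin n) (Fin n) ℝ)
      - (1 - c • vecMulVec p p) * B * (1 - c • vecMulVec p p)).det) * hdet


lemma coeff_prod_neg {ι : Type*} [DecidableEq ι] (s : Finset ι) (g : ι → ℝ) {j : ℕ}
    (hj : j ≤ s.card) :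
    (∏ l ∈ s, (X + C (- g l))).coeff (s.card - j)
      = (-1)^j * ∑ T ∈ s.powersetCard j, ∏ l ∈ T, g l := by
  rw [Finset.prod_X_add_C_coeff _ _ (Nat.sub_le _ _)]
  have hcc : s.card - (s.card - j) = j := by omega
  rw [hcc, Finset.mul_sum]
  apply Finset.sum_congr rfl
  intro T hT
  have hTcard : T.card = j := (Finset.mem_powersetCard.mp hT).2
  rw [show (∏ l ∈ T, -g l) = ∏ l ∈ T, (-1) * g l from
    Finset.prod_congr rfl fun l _ => by ring]
  rw [Finset.prod_mul_distrib, Finset.prod_const, hTcard]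

lemma coeff_univ_neg (g : Fin n → ℝ) {j : ℕ} (hj : j ≤ n) :
    (∏ l, (X + C (- g l))).coeff (n - j) = (-1)^j * esym n j g := by
  have h := coeff_prod_neg (Finset.univ : Finset (Fin n)) g (j := j) (by simpa using hj)
  simp only [Finset.card_univ, Fintype.card_fin] at h
  rw [h]
  rfl

lemma coeff_erase_neg (g : Fin n → ℝ) (i : Fin n) {j : ℕ} (hj : j ≤ n - 1) :
    (∏ l ∈ Finset.univ.erase i, (X + C (- g l))).coeff (n - 1 - j)
      = (-1)^j * esymDel n i j g := by
  have hcard : (Finset.univ.erase i).card = n - 1 := by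
    rw [Finset.card_erase_of_mem (Finset.mem_univ i)]
    simp
  have h := coeff_prod_neg (Finset.univ.erase i) g (j := j) (by omega)
  rw [hcard] at h
  rw [h]
  rfl

lemma master (B G : Matrix (Fin n) (Fin n) ℝ) (hB : B.IsHermitian)
    (p : Fin n → ℝ) (w : ℝ) (hw : 1 ≤ w) (hpp : p ⬝ᵥ p = w ^ 2 - 1)
    (hG : G = 1 - (w * (1 + w))⁻¹ • vecMulVec p p)
    (hA : (G * B * G).IsHermitian) :
    ∃ vq : Fin n → ℝ, ∀ j : ℕ, 1 ≤ j → j < n →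
      w ^ 2 * esym n j hA.eigenvalues
        = esym n j hB.eigenvalues + ∑ i, (vq i)^2 * esymDel n i j hB.eigenvalues := by
  classical
  subst hG
  obtain ⟨vq, hvqq, hdet⟩ := conj_setup B hB p (w * (1 + w))⁻¹
  rw [hpp] at hvqq
  refine ⟨vq, ?_⟩
  have hw0 : w ≠ 0 := by linarith
  have h1w : (1:ℝ) + w ≠ 0 := by linarith
  set β := hB.eigenvalues with hβ
  set α := hA.eigenvalues with hα
  set G' : Matrix (Fin n) (Fin n) ℝ := 1 - (w * (1 + w))⁻¹ • vecMulVec vq vq with hG'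
  have hdetG' : G'.det = w⁻¹ := by
    rw [hG', det_one_sub_smul_vmv, hvqq]
    field_simp
    ring
  have hfun : ∀ t : ℝ, (∀ i, t ≠ β i) →
      w^2 * (∏ i, (t - α i))
        = (∏ i, (t - β i)) + t * ∑ i, (vq i)^2 * ∏ l ∈ Finset.univ.erase i, (t - β l) := by
    intro t ht
    have hAdet := det_tsub _ hA t
    rw [← hAdet, ← hdet t]
    have hsand : G' * ((1 : Matrix (Fin n) (Fin n) ℝ) + vecMulVec vq vq) * G' = 1 :=
      G_sandwich vq w hw hvqq
    have hswgen : ∀ H : Matrix (Fin n) (Fin n) ℝ,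
        H * ((1 : Matrix (Fin n) (Fin n) ℝ) + vecMulVec vq vq) * H = 1 →
        H * (t • ((1 : Matrix (Fin n) (Fin n) ℝ) + vecMulVec vq vq)
          - Matrix.diagonal β) * H
        = t • (1 : Matrix (Fin n) (Fin n) ℝ) - H * Matrix.diagonal β * H := by
      intro H hH
      rw [Matrix.mul_sub, Matrix.sub_mul, Matrix.mul_smul, Matrix.smul_mul, hH]
    have hsw := hswgen G' hsand
    rw [← hsw, det_mul, det_mul, hdetG',
      det_diag_rank1 β vq t (fun i => sub_ne_zero.mpr (ht i))]
    field_simp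
  intro j hj1 hjn
  set PA : ℝ[X] := ∏ l, (X + C (- α l)) with hPA
  set PB : ℝ[X] := ∏ l, (X + C (- β l)) with hPB
  set R : Fin n → ℝ[X] := fun i => ∏ l ∈ Finset.univ.erase i, (X + C (- β l)) with hR
  have hpoly : C (w^2) * PA = PB + X * ∑ i, C ((vq i)^2) * R i := by
    apply eq_of_infinite_eval_eq
    apply Set.Infinite.mono (s := (Set.range β)ᶜ) ?_ ((Set.finite_range β).infinite_compl)
    intro t ht
    have htβ : ∀ i, t ≠ β i := fun i h => ht ⟨i, h.symm⟩
    have hPAe : PA.eval t = ∏ i, (t - α i) := by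
      rw [hPA, eval_prod]
      exact Finset.prod_congr rfl fun l _ => by simp [sub_eq_add_neg]
    have hPBe : PB.eval t = ∏ i, (t - β i) := by
      rw [hPB, eval_prod]
      exact Finset.prod_congr rfl fun l _ => by simp [sub_eq_add_neg]
    have hRe : ∀ i, (R i).eval t = ∏ l ∈ Finset.univ.erase i, (t - β l) := by
      intro i
      rw [hR]
      simp only
      rw [eval_prod]
      exact Finset.prod_congr rfl fun l _ => by simp [sub_eq_add_neg]
    simp only [Set.mem_setOf_eq, eval_mul, eval_C, eval_add, eval_X, eval_finset_sum]
    rw [hPAe, hPBe]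
    rw [hfun t htβ]
    congr 1
    congr 1
    apply Finset.sum_congr rfl
    intro i _
    rw [hRe i]
  have hco := congrArg (fun q : ℝ[X] => q.coeff (n - j)) hpoly
  simp only [coeff_C_mul, coeff_add] at hco
  have hnj : n - j = (n - j - 1) + 1 := by omega
  rw [hnj, coeff_X_mul, finset_sum_coeff] at hco
  simp only [coeff_C_mul] at hco
  rw [← hnj] at hco
  rw [hPA, coeff_univ_neg α (le_of_lt hjn)] at hco
  rw [hPB, coeff_univ_neg β (le_of_lt hjn)] at hco
  have hnj2 : n - j - 1 = n - 1 - j := by omega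
  have hRco : ∀ i, (R i).coeff (n - j - 1) = (-1)^j * esymDel n i j β := by
    intro i
    rw [hnj2, hR]
    exact coeff_erase_neg β i (by omega)
  rw [Finset.sum_congr rfl (fun i _ => by rw [hRco i])] at hco
  -- cancel the (-1)^j factor
  apply mul_left_cancel₀ (show ((-1:ℝ)^j) ≠ 0 from pow_ne_zero _ (by norm_num))
  calc (-1:ℝ)^j * (w^2 * esym n j α)
      = w^2 * ((-1:ℝ)^j * esym n j α) := by ring
    _ = (-1:ℝ)^j * esym n j β + ∑ i, (vq i)^2 * ((-1:ℝ)^j * esymDel n i j β) := hco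
    _ = (-1:ℝ)^j * (esym n j β + ∑ i, (vq i)^2 * esymDel n i j β) := by
        rw [mul_add, Finset.mul_sum]
        congr 1
        exact Finset.sum_congr rfl fun i _ => by ring

end MatrixPart

end Stmt8Aux

/-- **Lemma 3.1 of Ivochkina / Lemma 2.4.** If `v ∈ C²(Ω)` is `(k+1)`-convex and `u ∈ C²(Ω)`,
then at every `x ∈ Ω` the symmetric matrix `γ (D²v) γ` (which represents `∇²v − ν(v)h` on the
graph of `u`) has eigenvalue vector in `Γ̄_k` and satisfies
`σ_j(λ(γ (D²v) γ)) ≥ w⁻² σ_j(λ(D²v))` for `j = 1,…,k`. -/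


theorem stmt8 (n k : ℕ) (hk1 : 1 ≤ k) (hkn : k < n)
    (Ω : Set (E n)) (hΩ : IsOpen Ω)
    (u v : E n → ℝ)
    (hu : ContDiffOn ℝ 2 u Ω) (hv : ContDiffOn ℝ 2 v Ω)
    (hconv : ∀ x ∈ Ω, EigsIn (hess v x) (closure (GCone n (k + 1)))) :
    ∀ x ∈ Ω,
      ∃ (hA : (gam u x * hess v x * gam u x).IsHermitian) (hB : (hess v x).IsHermitian),
        hA.eigenvalues ∈ closure (GCone n k) ∧
        ∀ j, 1 ≤ j → j ≤ k →
          ((wgt u x) ^ 2)⁻¹ * esym n j hB.eigenvalues ≤ esym n j hA.eigenvalues := by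
  classical
  intro x hx
  obtain ⟨hB, hBmem⟩ := hconv x hx
  set B := hess v x with hBdef
  set p : Fin n → ℝ := fun i => pd u i x with hpdef
  set w : ℝ := wgt u x with hwdef
  have hsum_nonneg : (0:ℝ) ≤ 1 + ∑ i, (pd u i x) ^ 2 := by positivity
  have hw : 1 ≤ w := by
    have h1 : Real.sqrt 1 ≤ Real.sqrt (1 + ∑ i, (pd u i x) ^ 2) := by
      apply Real.sqrt_le_sqrt
      have : (0:ℝ) ≤ ∑ i, (pd u i x) ^ 2 := by positivity
      linarith
    rw [Real.sqrt_one] at h1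
    rw [hwdef, wgt]
    exact h1
  have hw0 : (0:ℝ) < w := by linarith
  have hpp : dotProduct p p = w ^ 2 - 1 := by
    have hsq : w ^ 2 = 1 + ∑ i, (pd u i x) ^ 2 := by
      rw [hwdef, wgt, sq, Real.mul_self_sqrt hsum_nonneg]
    rw [hsq]
    simp only [dotProduct, hpdef]
    rw [show (∑ i, pd u i x * pd u i x) = ∑ i, (pd u i x)^2 from
      Finset.sum_congr rfl fun i _ => (pow_two (pd u i x)).symm]
    ring
  have hgam : gam u x = 1 - (w * (1 + w))⁻¹ • Matrix.vecMulVec p p := by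
    ext i j
    simp only [gam, Matrix.of_apply, Matrix.sub_apply, Matrix.smul_apply,
      Matrix.vecMulVec_apply, Matrix.one_apply, smul_eq_mul, hpdef, hwdef]
    rw [div_eq_mul_inv]
    ring
  have hGherm : Matrix.conjTranspose (gam u x) = gam u x := by
    ext i j
    simp only [Matrix.conjTranspose_apply, star_trivial, gam, Matrix.of_apply]
    by_cases h : i = j
    · subst h; ring
    · rw [if_neg h, if_neg (Ne.symm h)]
      ring
  have hA : (gam u x * hess v x * gam u x).IsHermitian := by
    have hBh : Matrix.conjTranspose (hess v x) = hess v x := hB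
    show Matrix.conjTranspose (gam u x * hess v x * gam u x) = gam u x * hess v x * gam u x
    rw [Matrix.conjTranspose_mul, Matrix.conjTranspose_mul, hGherm, hBh, Matrix.mul_assoc]
  obtain ⟨vq, hmas⟩ := Stmt8Aux.master B (gam u x) hB p w hw hpp hgam hA
  set α := hA.eigenvalues with hα
  set β := hB.eigenvalues with hβ
  have hβnn : ∀ m, 1 ≤ m → m ≤ k + 1 → 0 ≤ esym n m β := by
    intro m h1 h2
    exact Stmt8Aux.nonneg_of_mem_closure (S := GCone n (k+1)) (Stmt8Aux.esym_continuous n m)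
      (fun y hy => hy m h1 h2) hBmem
  have hdelnn : ∀ (i : Fin n) (j : ℕ), 1 ≤ j → j ≤ k → 0 ≤ Stmt8Aux.esymDel n i j β := by
    intro i j h1 h2
    apply Stmt8Aux.nonneg_of_mem_closure (S := GCone n (k+1))
      (Stmt8Aux.esymDel_continuous n i j)
      (fun y hy => Stmt8Aux.esymDel_pos y i j h1 (by omega)
        (fun m hm1 hm2 => hy m hm1 (by omega))) hBmem
  have hkey : ∀ j, 1 ≤ j → j ≤ k →
      w ^ 2 * esym n j α = esym n j β + ∑ i, (vq i)^2 * Stmt8Aux.esymDel n i j β := by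
    intro j h1 h2
    exact hmas j h1 (lt_of_le_of_lt h2 hkn)
  have hSnn : ∀ j, 1 ≤ j → j ≤ k →
      0 ≤ ∑ i, (vq i)^2 * Stmt8Aux.esymDel n i j β := by
    intro j h1 h2
    apply Finset.sum_nonneg
    intro i _
    exact mul_nonneg (sq_nonneg _) (hdelnn i j h1 h2)
  refine ⟨hA, hB, ?_, ?_⟩
  · apply Stmt8Aux.mem_closure_GCone hk1 (le_of_lt hkn)
    intro m h1 h2
    have hk := hkey m h1 h2
    have hs := hSnn m h1 h2
    have hb := hβnn m h1 (by omega)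
    nlinarith [hk, hs, hb, sq_nonneg w, hw0, mul_pos hw0 hw0]
  · intro j h1 h2
    have hk := hkey j h1 h2
    have hs := hSnn j h1 h2
    have hw2 : (0:ℝ) < w ^ 2 := by positivity
    rw [inv_mul_le_iff₀ hw2]
    nlinarith [hk, hs]
end
end

section
/- Let k ≥ 2 be an integer, let D ⊂ ℝ^N be a bounded domain, let ψ ∈ C^2(D̄) be nonnegative, and set f = ψ^{k−1}. Then there is a constant C depending only on k, sup_D ψ, sup_D |Dψ|, sup_D λ_max(D^2 ψ), and the diameter of D, such that for every x ∈ D with f(x) > 0: |Df(x)|² / f(x) ≤ (C / dist(x, ∂D)²) · f(x)^{1 − 1/(k−1)}. -/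
open scoped BigOperators Topology
open MeasureTheory

noncomputable section

lemma euclid_decomp {N : ℕ} (v : E N) : v = ∑ i, v i • EuclideanSpace.single i 1 := by
  ext j
  rw [WithLp.ofLp_sum, Finset.sum_apply]
  simp [EuclideanSpace.single_apply]

lemma clm_apply_expand {N : ℕ} (L : E N →L[ℝ] ℝ) (v : E N) :
    L v = ∑ i, v i * L (EuclideanSpace.single i 1) := by
  conv_lhs => rw [euclid_decomp v]
  rw [map_sum]
  simp [smul_eq_mul]

lemma clm2_expand {N : ℕ} (B : E N →L[ℝ] E N →L[ℝ] ℝ) (v : E N) :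
    B v v = ∑ i, ∑ j, B (EuclideanSpace.single i 1) (EuclideanSpace.single j 1) * v i * v j := by
  have h : ∀ j, (B v) (EuclideanSpace.single j 1)
      = ∑ i, v i * B (EuclideanSpace.single i 1) (EuclideanSpace.single j 1) := by
    intro j
    have h2 := clm_apply_expand (B.flip (EuclideanSpace.single j 1)) v
    simpa using h2
  calc (B v) v = ∑ j, v j * (B v) (EuclideanSpace.single j 1) := clm_apply_expand _ _
    _ = ∑ j, ∑ i, B (EuclideanSpace.single i 1) (EuclideanSpace.single j 1) * v i * v j := by
        refine Finset.sum_congr rfl fun j _ => ?_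
        rw [h j, Finset.mul_sum]
        exact Finset.sum_congr rfl fun i _ => by ring
    _ = _ := Finset.sum_comm

lemma ball_subset_of_infDist {N : ℕ} {D : Set (E N)} (hD : IsOpen D) {x : E N} (hx : x ∈ D) :
    Metric.ball x (Metric.infDist x (frontier D)) ⊆ D := by
  rcases le_or_gt (Metric.infDist x (frontier D)) 0 with h | h
  · simp [Metric.ball_eq_empty.2 h]
  refine IsPreconnected.subset_left_of_subset_union hD isClosed_closure.isOpen_compl
    (disjoint_compl_right.mono_left subset_closure) ?_
    ⟨x, Metric.mem_ball_self h, hx⟩ (convex_ball x _).isPreconnected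
  intro y hy
  rcases em (y ∈ closure D) with hyc | hyc
  · left
    have hnf : y ∉ frontier D := Metric.ball_infDist_subset_compl hy
    by_contra hyD
    exact hnf ⟨hyc, by rwa [hD.interior_eq]⟩
  · right; exact hyc

lemma taylor_ineq {N : ℕ} {D : Set (E N)} (hD : IsOpen D) {ψ : E N → ℝ}
    (hψ : ContDiffOn ℝ 2 ψ (closure D)) {M : ℝ}
    (hHess : ∀ y ∈ D, ∀ v : E N, ∑ i, ∑ j, hess ψ y i j * v i * v j ≤ M * ‖v‖ ^ 2)
    {x : E N} {v : E N} (hv : ‖v‖ = 1) {t : ℝ} (ht0 : 0 ≤ t)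
    (htd : ∀ s : ℝ, 0 ≤ s → s ≤ t → x + s • v ∈ D) :
    ψ (x + t • v) ≤ ψ x + fderiv ℝ ψ x v * t + M / 2 * t ^ 2 := by
  have hψD : ContDiffOn ℝ 2 ψ D := hψ.mono subset_closure
  set F := fderiv ℝ ψ with hF
  have hdiff : ∀ y ∈ D, DifferentiableAt ℝ ψ y := fun y hy =>
    (hψD.differentiableOn (by norm_num)).differentiableAt (hD.mem_nhds hy)
  have hFc : ContDiffOn ℝ 1 F D := hψD.fderiv_of_isOpen hD (by norm_num)
  have hFd : ∀ y ∈ D, DifferentiableAt ℝ F y := fun y hy =>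
    (hFc.differentiableOn (by norm_num)).differentiableAt (hD.mem_nhds hy)
  set c : ℝ → E N := fun s => x + s • v with hcdef
  have hc : ∀ s : ℝ, HasDerivAt c v s := by
    intro s
    have h := ((hasDerivAt_id s).smul_const v).const_add x
    rw [one_smul] at h
    exact h
  set φ : ℝ → ℝ := fun s => ψ (c s) with hφdef
  set φ₁ : ℝ → ℝ := fun s => F (c s) v with hφ₁def
  set Q : ℝ → ℝ := fun s => ∑ i, ∑ j, hess ψ (c s) i j * v i * v j with hQdef
  have hmem : ∀ s ∈ Set.Icc 0 t, c s ∈ D := fun s hs => htd s hs.1 hs.2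
  have hφ' : ∀ s ∈ Set.Icc 0 t, HasDerivAt φ (φ₁ s) s := fun s hs =>
    ((hdiff _ (hmem s hs)).hasFDerivAt).comp_hasDerivAt s (hc s)
  -- second derivatives
  have hhessB : ∀ y ∈ D, ∀ i j, hess ψ y i j =
      (fderiv ℝ F y (EuclideanSpace.single i 1)) (EuclideanSpace.single j 1) := by
    intro y hy i j
    have hpd : pd ψ j = fun z => F z (EuclideanSpace.single j 1) := rfl
    have h := fderiv_clm_apply (𝕜 := ℝ) (hFd y hy)
      (differentiableAt_const (EuclideanSpace.single j 1 : E N))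
    show (fderiv ℝ (pd ψ j) y) (EuclideanSpace.single i 1) = _
    rw [hpd, h]
    simp
  have hφ₁' : ∀ s ∈ Set.Icc 0 t, HasDerivAt φ₁ (Q s) s := by
    intro s hs
    have hy := hmem s hs
    have h1 : HasDerivAt (fun u => F (c u)) (fderiv ℝ F (c s) v) s :=
      ((hFd _ hy).hasFDerivAt).comp_hasDerivAt s (hc s)
    have h2 := h1.clm_apply (hasDerivAt_const s v)
    simp only [map_zero, add_zero] at h2
    have h3 : (fderiv ℝ F (c s)) v v = Q s := by
      rw [clm2_expand]
      exact Finset.sum_congr rfl fun i _ => Finset.sum_congr rfl fun j _ => by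
        rw [hhessB _ hy]
    rwa [h3] at h2
  have hQle : ∀ s ∈ Set.Icc 0 t, Q s ≤ M := by
    intro s hs
    have := hHess _ (hmem s hs) v
    rwa [hv, one_pow, mul_one] at this
  -- step 1 : φ₁ s ≤ φ₁ 0 + M * s on [0,t]
  have step1 : ∀ s ∈ Set.Icc 0 t, φ₁ s ≤ φ₁ 0 + M * s := by
    intro s hs
    set A1 : ℝ → ℝ := fun u => φ₁ u - M * u with hA1def
    have hA1' : ∀ u ∈ Set.Icc 0 t, HasDerivAt A1 (Q u - M) u := by
      intro u hu
      have h1 : Q u - M = Q u - M * 1 := by ring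
      rw [hA1def, h1]
      exact (hφ₁' u hu).sub ((hasDerivAt_id u).const_mul M)
    have hanti : AntitoneOn A1 (Set.Icc 0 t) := by
      apply antitoneOn_of_deriv_nonpos (convex_Icc 0 t)
      · exact fun u hu => (hA1' u hu).continuousAt.continuousWithinAt
      · intro u hu
        rw [interior_Icc] at hu
        exact ((hA1' u (Set.Ioo_subset_Icc_self hu)).differentiableAt).differentiableWithinAt
      · intro u hu
        rw [interior_Icc] at hu
        rw [(hA1' u (Set.Ioo_subset_Icc_self hu)).deriv]
        linarith [hQle u (Set.Ioo_subset_Icc_self hu)]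
    have := hanti (Set.left_mem_Icc.2 ht0) hs hs.1
    simp only [hA1def, mul_zero, sub_zero] at this
    linarith
  -- step 2
  set A2 : ℝ → ℝ := fun u => φ u - φ₁ 0 * u - M / 2 * u ^ 2 with hA2def
  have hA2' : ∀ u ∈ Set.Icc 0 t, HasDerivAt A2 (φ₁ u - φ₁ 0 - M * u) u := by
    intro u hu
    have h2 : φ₁ u - φ₁ 0 - M * u
        = (φ₁ u - φ₁ 0 * 1) - M / 2 * (((2 : ℕ) : ℝ) * u ^ (2 - 1)) := by
      push_cast; ring
    rw [hA2def, h2]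
    exact ((hφ' u hu).sub ((hasDerivAt_id u).const_mul (φ₁ 0))).sub
      ((hasDerivAt_pow 2 u).const_mul (M / 2))
  have hanti2 : AntitoneOn A2 (Set.Icc 0 t) := by
    apply antitoneOn_of_deriv_nonpos (convex_Icc 0 t)
    · exact fun u hu => (hA2' u hu).continuousAt.continuousWithinAt
    · intro u hu
      rw [interior_Icc] at hu
      exact ((hA2' u (Set.Ioo_subset_Icc_self hu)).differentiableAt).differentiableWithinAt
    · intro u hu
      rw [interior_Icc] at hu
      rw [(hA2' u (Set.Ioo_subset_Icc_self hu)).deriv]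
      linarith [step1 u (Set.Ioo_subset_Icc_self hu)]
  have hfin := hanti2 (Set.left_mem_Icc.2 ht0) (Set.right_mem_Icc.2 ht0) ht0
  have hc0 : c 0 = x := by simp [hcdef]
  have hφ0 : φ 0 = ψ x := by rw [hφdef]; simp [hc0]
  have hφ₁0 : φ₁ 0 = fderiv ℝ ψ x v := by rw [hφ₁def]; simp [hc0]; rfl
  simp only [hA2def, hφ0, hφ₁0, mul_zero, sub_zero, ne_eq, OfNat.ofNat_ne_zero,
    not_false_eq_true, zero_pow] at hfin
  have : φ t = ψ (x + t • v) := rfl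
  linarith [hfin]

lemma grad_sq_bound {N : ℕ} {D : Set (E N)} (hD : IsOpen D) (hDb : Bornology.IsBounded D)
    {ψ : E N → ℝ} (hψ : ContDiffOn ℝ 2 ψ (closure D)) {M : ℝ} (hM : 0 < M)
    (hpos : ∀ x ∈ closure D, 0 ≤ ψ x)
    (hψM : ∀ x ∈ D, ψ x ≤ M)
    (hHess : ∀ y ∈ D, ∀ v : E N, ∑ i, ∑ j, hess ψ y i j * v i * v j ≤ M * ‖v‖ ^ 2)
    (hdiam : Metric.diam D ≤ M)
    (hne : (frontier D).Nonempty) {x : E N} (hx : x ∈ D) :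
    ‖gradVec ψ x‖ ^ 2 * Metric.infDist x (frontier D) ^ 2 ≤ (2 * M ^ 3 + 16 * M) * ψ x := by
  set d := Metric.infDist x (frontier D) with hddef
  have hxf : x ∉ frontier D := fun h => h.2 (by rwa [hD.interior_eq])
  have hd : 0 < d := (isClosed_frontier.notMem_iff_infDist_pos hne).1 hxf
  have hψx : 0 ≤ ψ x := hpos x (subset_closure hx)
  have hdM : d ≤ M := by
    obtain ⟨y, hy⟩ := hne
    have h1 : d ≤ dist x y := Metric.infDist_le_dist_of_mem hy
    have h2 : dist x y ≤ Metric.diam (closure D) :=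
      Metric.dist_le_diam_of_mem hDb.closure (subset_closure hx) (frontier_subset_closure hy)
    rw [Metric.diam_closure] at h2
    linarith
  set G := ‖gradVec ψ x‖ with hGdef
  have hG0 : 0 ≤ G := norm_nonneg _
  have hG2 : G ^ 2 = ∑ i, pd ψ i x ^ 2 := by
    rw [hGdef, EuclideanSpace.norm_eq,
      Real.sq_sqrt (Finset.sum_nonneg fun i _ => sq_nonneg _)]
    simp [gradVec, Real.norm_eq_abs, sq_abs]
  rcases eq_or_lt_of_le hG0 with hG | hG
  · have hrhs : 0 ≤ (2 * M ^ 3 + 16 * M) * ψ x :=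
      mul_nonneg (by positivity) hψx
    rw [← hG]
    nlinarith
  have key : ∀ t : ℝ, 0 ≤ t → t < d → G * t ≤ ψ x + M / 2 * t ^ 2 := by
    intro t ht0 htd
    set v : E N := (-G⁻¹) • gradVec ψ x with hvdef
    have hv : ‖v‖ = 1 := by
      rw [hvdef, norm_smul, Real.norm_eq_abs, abs_neg, abs_inv, abs_of_pos hG, ← hGdef]
      exact inv_mul_cancel₀ (ne_of_gt hG)
    have hmem : ∀ s : ℝ, 0 ≤ s → s ≤ t → x + s • v ∈ D := by
      intro s h0 h1
      apply ball_subset_of_infDist hD hx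
      rw [Metric.mem_ball, dist_eq_norm]
      simp only [add_sub_cancel_left]
      rw [norm_smul, hv, mul_one, Real.norm_eq_abs, abs_of_nonneg h0]
      linarith
    have htay := taylor_ineq hD hψ hHess hv ht0 hmem
    have hfd : fderiv ℝ ψ x v = -G := by
      rw [clm_apply_expand (fderiv ℝ ψ x) v]
      have hvi : ∀ i, v i = -G⁻¹ * pd ψ i x := by
        intro i; rw [hvdef]; simp [gradVec]
      have hpdi : ∀ i : Fin N, (fderiv ℝ ψ x) (EuclideanSpace.single i 1) = pd ψ i x :=
        fun i => rfl
      calc ∑ i, v i * (fderiv ℝ ψ x) (EuclideanSpace.single i 1)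
          = ∑ i, -G⁻¹ * pd ψ i x ^ 2 := by
            refine Finset.sum_congr rfl fun i _ => ?_
            rw [hvi i, hpdi i]; ring
        _ = -G⁻¹ * ∑ i, pd ψ i x ^ 2 := by rw [← Finset.mul_sum]
        _ = -G⁻¹ * G ^ 2 := by rw [← hG2]
        _ = -G := by field_simp
    have h0 : 0 ≤ ψ (x + t • v) := hpos _ (subset_closure (hmem t ht0 le_rfl))
    rw [hfd] at htay
    nlinarith [htay, h0]
  rcases le_or_gt G (M * d / 2) with hc | hc
  · have ht1 : M * (G / M) = G := by field_simp
    have htlt : G / M < d := by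
      rw [div_lt_iff₀ hM]
      nlinarith
    have h1 := key (G / M) (by positivity) htlt
    have h1' := mul_le_mul_of_nonneg_left h1 hM.le
    have hGsq : G ^ 2 ≤ 2 * M * ψ x := by nlinarith [ht1, h1']
    have s1 : G ^ 2 * d ^ 2 ≤ 2 * M * ψ x * d ^ 2 :=
      mul_le_mul_of_nonneg_right hGsq (sq_nonneg d)
    have s2 : 2 * M * ψ x * d ^ 2 ≤ 2 * M * ψ x * M ^ 2 := by
      apply mul_le_mul_of_nonneg_left _ (by positivity)
      nlinarith
    nlinarith [mul_nonneg hM.le hψx]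
  · have h2 := key (d / 2) (by linarith) (by linarith)
    have hψxM := hψM x hx
    have hG4 : G * d ≤ 4 * ψ x := by nlinarith
    have s1 : (G * d) * (G * d) ≤ (4 * ψ x) * (4 * ψ x) :=
      mul_le_mul hG4 hG4 (mul_nonneg hG0 hd.le) (by linarith)
    have s2 : 16 * (ψ x * ψ x) ≤ 16 * (M * ψ x) := by nlinarith
    nlinarith [mul_nonneg (by positivity : (0:ℝ) ≤ 2 * M ^ 3) hψx]

/-- For `k ≥ 2`, a bounded domain `D ⊂ ℝ^N`, nonnegative `ψ ∈ C²(D̄)` and `f = ψ^{k-1}`: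
there is `C` depending only on `k` and on bounds `M` for `sup ψ`, `sup |Dψ|`,
`sup λ_max(D²ψ)` and `diam D`, such that
`|Df(x)|²/f(x) ≤ (C/dist(x,∂D)²) f(x)^{1-1/(k-1)}` wherever `f(x) > 0`. -/
theorem stmt16 (k : ℕ) (hk : 2 ≤ k) (M : ℝ) (hM : 0 < M) :
    ∃ C > (0:ℝ), ∀ (N : ℕ) (D : Set (E N)) (ψ : E N → ℝ),
      IsOpen D → IsConnected D → Bornology.IsBounded D →
      ContDiffOn ℝ 2 ψ (closure D) →
      (∀ x ∈ closure D, 0 ≤ ψ x) →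
      (∀ x ∈ D, ψ x ≤ M) →
      (∀ x ∈ D, ‖gradVec ψ x‖ ≤ M) →
      (∀ y ∈ D, ∀ v : E N, ∑ i, ∑ j, hess ψ y i j * v i * v j ≤ M * ‖v‖ ^ 2) →
      Metric.diam D ≤ M →
      ∀ x ∈ D, 0 < (ψ x) ^ (k - 1) →
        ‖gradVec (fun y => (ψ y) ^ (k - 1)) x‖ ^ 2 / (ψ x) ^ (k - 1)
          ≤ C / Metric.infDist x (frontier D) ^ 2 *
              ((ψ x) ^ (k - 1)) ^ (1 - 1 / ((k : ℝ) - 1)) := by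
  have hk1 : (1:ℕ) ≤ k := by omega
  have hk2 : (2:ℝ) ≤ (k:ℝ) := by exact_mod_cast hk
  refine ⟨((k:ℝ) - 1) ^ 2 * (2 * M ^ 3 + 16 * M),
    mul_pos (pow_pos (by linarith) 2) (by positivity), ?_⟩
  intro N D ψ hD hDc hDb hψ hpos hψM hgradM hHess hdiam x hx hfx
  have hψx : 0 < ψ x := by
    rcases (hpos x (subset_closure hx)).lt_or_eq with h | h
    · exact h
    · exfalso; rw [← h, zero_pow (by omega : k - 1 ≠ 0)] at hfx; exact lt_irrefl 0 hfx
  have hdiffψ : DifferentiableAt ℝ ψ x :=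
    ((hψ.mono subset_closure).differentiableOn (by norm_num)).differentiableAt (hD.mem_nhds hx)
  have hFf : HasFDerivAt (fun y => ψ y ^ (k - 1))
      ((((k - 1 : ℕ) : ℝ) * ψ x ^ (k - 1 - 1)) • fderiv ℝ ψ x) x := by
    have h := (hasDerivAt_pow (k - 1) (ψ x)).comp_hasFDerivAt x hdiffψ.hasFDerivAt
    exact h
  have hgrad : gradVec (fun y => ψ y ^ (k - 1)) x
      = ((((k - 1 : ℕ) : ℝ) * ψ x ^ (k - 1 - 1)) • gradVec ψ x : E N) := by
    ext i
    show pd (fun y => ψ y ^ (k - 1)) i x = _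
    rw [pd, hFf.fderiv]
    simp [gradVec, pd]
  have hkk : k - 1 - 1 = k - 2 := by omega
  rw [hkk] at hgrad
  have hc0 : (0:ℝ) ≤ ((k - 1 : ℕ) : ℝ) * ψ x ^ (k - 2) := by positivity
  have hnormf : ‖gradVec (fun y => ψ y ^ (k - 1)) x‖
      = ((k - 1 : ℕ) : ℝ) * ψ x ^ (k - 2) * ‖gradVec ψ x‖ := by
    rw [hgrad, norm_smul, Real.norm_eq_abs, abs_of_nonneg hc0]
  by_cases hne : (frontier D).Nonempty
  · have hgb := grad_sq_bound hD hDb hψ hM hpos hψM hHess hdiam hne hx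
    set d := Metric.infDist x (frontier D) with hddef
    have hxf : x ∉ frontier D := fun h => h.2 (by rwa [hD.interior_eq])
    have hd : 0 < d := (isClosed_frontier.notMem_iff_infDist_pos hne).1 hxf
    set G := ‖gradVec ψ x‖ with hGdef
    have hG0 : (0:ℝ) ≤ G := norm_nonneg _
    have hrpow : ((ψ x ^ (k - 1) : ℝ)) ^ ((1:ℝ) - 1 / ((k : ℝ) - 1)) = ψ x ^ (k - 2) := by
      rw [← Real.rpow_natCast (ψ x) (k - 1), ← Real.rpow_mul hψx.le,
        ← Real.rpow_natCast (ψ x) (k - 2)]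
      congr 1
      rw [Nat.cast_sub hk1, Nat.cast_sub hk]
      have hne1 : (k:ℝ) - 1 ≠ 0 := by linarith
      field_simp
      ring
    rw [hrpow, hnormf, div_le_iff₀ (pow_pos hψx _), div_mul_eq_mul_div, div_mul_eq_mul_div,
      le_div_iff₀ (by positivity : (0:ℝ) < d ^ 2)]
    have hpow : ψ x ^ (k - 1) = ψ x ^ (k - 2) * ψ x := by
      rw [← pow_succ]; congr 1; omega
    have hcast : ((k - 1 : ℕ) : ℝ) = (k : ℝ) - 1 := by
      rw [Nat.cast_sub hk1]; norm_num
    rw [hpow, hcast]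
    have hmul := mul_le_mul_of_nonneg_left hgb
      (by positivity : (0:ℝ) ≤ ((k:ℝ) - 1) ^ 2 * (ψ x ^ (k - 2)) ^ 2)
    nlinarith [hmul]
  · have hfr : frontier D = ∅ := Set.not_nonempty_iff_eq_empty.1 hne
    have hclo : IsClopen D := isClopen_iff_frontier_eq_empty.2 hfr
    have huniv : D = Set.univ := hclo.eq_univ ⟨x, hx⟩
    have hsub : Subsingleton (E N) := by
      rcases subsingleton_or_nontrivial (E N) with h | h
      · exact h
      · exact absurd (huniv ▸ hDb) (NormedSpace.unbounded_univ ℝ (E N))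
    have hg0 : gradVec (fun y => ψ y ^ (k - 1)) x = 0 := Subsingleton.elim _ _
    rw [hg0, hfr]
    simp [Metric.infDist_empty]
end
end
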